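/- arXiv:1302.2803 — 8 statements merged into one kernel-verified Lean document; each statement's English description precedes it below -/
import Mathlib

section
/- Let H be a complex Hilbert space, let (V_n)_{n∈ℕ} be a sequence of bounded linear operators on H and V a bounded linear operator on H. If V_n → V in the operator norm of B(H) and V_n V = V V_n for every n ∈ ℕ, then lim_{n→∞} r(V_n) = r(V). -/
open Filter Topology
set_option linter.unusedSectionVars false

section Aux

variable {A : Type*} [NormedRing A] [NormedAlgebra ℂ A] [CompleteSpace A]

lemma specRad_ne_top (a : A) : spectralRadius ℂ a ≠ ⊤ := by
  refine ne_top_of_le_ne_top ?_ (spectrum.spectralRadius_le_pow_nnnorm_pow_one_div ℂ a 0)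
  exact ENNReal.mul_ne_top (by simp [ENNReal.rpow_ne_top_of_nonneg])
    (by simp [ENNReal.rpow_ne_top_of_nonneg])

/-- Real Gelfand formula. -/
lemma gelfand_real (a : A) :
    Tendsto (fun n : ℕ => ‖a ^ n‖ ^ (1 / n : ℝ)) atTop
      (𝓝 ((spectralRadius ℂ a).toReal)) := by
  have h := spectrum.pow_norm_pow_one_div_tendsto_nhds_spectralRadius a
  have h2 := (ENNReal.tendsto_toReal (specRad_ne_top a)).comp h
  refine h2.congr fun n => ?_
  simp [ENNReal.toReal_ofReal (Real.rpow_nonneg (norm_nonneg _) _)]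

lemma specRad_toReal_nonneg (a : A) : 0 ≤ (spectralRadius ℂ a).toReal :=
  ENNReal.toReal_nonneg

lemma specRad_toReal_le_norm (a : A) : (spectralRadius ℂ a).toReal ≤ ‖a‖ := by
  refine le_of_tendsto (gelfand_real a) ?_
  filter_upwards [eventually_ge_atTop 1] with n hn
  calc ‖a ^ n‖ ^ (1 / n : ℝ) ≤ (‖a‖ ^ n) ^ (1 / n : ℝ) := by
        apply Real.rpow_le_rpow (norm_nonneg _) (norm_pow_le' a hn) (by positivity)
    _ = ‖a‖ := by
        rw [← Real.rpow_natCast ‖a‖ n, ← Real.rpow_mul (norm_nonneg _)]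
        rw [mul_one_div, div_self (Nat.cast_pos.mpr hn).ne', Real.rpow_one]

end Aux

section Aux2
open Finset in
lemma exists_geom_bound (u : ℕ → ℝ) (c : ℝ) (hc : 0 < c)
    (h : ∀ᶠ n in atTop, u n ≤ c ^ n) :
    ∃ M : ℝ, 1 ≤ M ∧ ∀ n, u n ≤ M * c ^ n := by
  obtain ⟨N, hN⟩ := eventually_atTop.mp h
  refine ⟨1 + ∑ k ∈ range N, max 0 (u k / c ^ k), ?_, ?_⟩
  · have : 0 ≤ ∑ k ∈ range N, max 0 (u k / c ^ k) :=
      Finset.sum_nonneg fun k _ => le_max_left _ _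
    linarith
  · intro n
    by_cases hn : N ≤ n
    · have h1 : (1 : ℝ) ≤ 1 + ∑ k ∈ range N, max 0 (u k / c ^ k) := by
        have : 0 ≤ ∑ k ∈ range N, max 0 (u k / c ^ k) :=
          Finset.sum_nonneg fun k _ => le_max_left _ _
        linarith
      calc u n ≤ c ^ n := hN n hn
        _ = 1 * c ^ n := (one_mul _).symm
        _ ≤ _ := by gcongr
    · have hmem : n ∈ range N := Finset.mem_range.mpr (lt_of_not_ge hn)
      have h1 : u n / c ^ n ≤ ∑ k ∈ range N, max 0 (u k / c ^ k) :=
        le_trans (le_max_right 0 _)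
          (Finset.single_le_sum (f := fun k => max (0:ℝ) (u k / c ^ k))
            (fun k _ => le_max_left 0 _) hmem)
      have hcn : (0:ℝ) < c ^ n := by positivity
      rw [div_le_iff₀ hcn] at h1
      nlinarith

variable {A : Type*} [NormedRing A] [NormedAlgebra ℂ A] [CompleteSpace A]

lemma eventually_norm_pow_le_geom (a : A) {r : ℝ}
    (hr : (spectralRadius ℂ a).toReal < r) :
    ∀ᶠ n in atTop, ‖a ^ n‖ ≤ r ^ n := by
  have h := (gelfand_real a).eventually (eventually_lt_nhds hr)
  filter_upwards [h, eventually_ge_atTop 1] with n hn hn1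
  have hnne : (n : ℝ) ≠ 0 := (Nat.cast_pos.mpr hn1).ne'
  have := pow_le_pow_left₀ (Real.rpow_nonneg (norm_nonneg _) _) hn.le n
  calc ‖a ^ n‖ = ((‖a ^ n‖ ^ (1 / n : ℝ)) ^ n : ℝ) := by
        rw [← Real.rpow_natCast (‖a ^ n‖ ^ (1 / n : ℝ)) n,
          ← Real.rpow_mul (norm_nonneg _), one_div_mul_cancel hnne, Real.rpow_one]
    _ ≤ r ^ n := this

open Finset in
lemma specRad_add_le {a b : A} (hab : Commute a b) :
    (spectralRadius ℂ (a + b)).toReal ≤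
      (spectralRadius ℂ a).toReal + (spectralRadius ℂ b).toReal := by
  set ra := (spectralRadius ℂ a).toReal with hra
  set rb := (spectralRadius ℂ b).toReal with hrb
  have hra0 : 0 ≤ ra := ENNReal.toReal_nonneg
  have hrb0 : 0 ≤ rb := ENNReal.toReal_nonneg
  refine le_of_forall_pos_le_add fun ε hε => ?_
  set δ := ε / 2 with hδdef
  have hδ : 0 < δ := by positivity
  obtain ⟨M, hM1, hM⟩ := exists_geom_bound (fun n => ‖a ^ n‖) (ra + δ)
    (by positivity) (eventually_norm_pow_le_geom a (by linarith))
  obtain ⟨M', hM'1, hM'⟩ := exists_geom_bound (fun n => ‖b ^ n‖) (rb + δ)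
    (by positivity) (eventually_norm_pow_le_geom b (by linarith))
  set C := ra + rb + ε with hC
  have hC0 : 0 < C := by positivity
  have key : ∀ n : ℕ, ‖(a + b) ^ n‖ ≤ (M * M') * C ^ n := by
    intro n
    rw [hab.add_pow]
    calc ‖∑ k ∈ range (n + 1), a ^ k * b ^ (n - k) * (n.choose k : A)‖
        ≤ ∑ k ∈ range (n + 1), ‖a ^ k * b ^ (n - k) * (n.choose k : A)‖ :=
          norm_sum_le _ _
      _ ≤ ∑ k ∈ range (n + 1),
            (M * (ra + δ) ^ k) * (M' * (rb + δ) ^ (n - k)) * (n.choose k : ℝ) := by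
          refine Finset.sum_le_sum fun k _ => ?_
          have he : a ^ k * b ^ (n - k) * (n.choose k : A)
              = (n.choose k) • (a ^ k * b ^ (n - k)) := by
            rw [nsmul_eq_mul, (Nat.cast_commute (n.choose k) _).eq]
          rw [he]
          calc ‖(n.choose k) • (a ^ k * b ^ (n - k))‖
              ≤ (n.choose k) * ‖a ^ k * b ^ (n - k)‖ := norm_nsmul_le
            _ ≤ (n.choose k) * (‖a ^ k‖ * ‖b ^ (n - k)‖) := by
                gcongr; exact norm_mul_le _ _
            _ ≤ (n.choose k) * ((M * (ra + δ) ^ k) * (M' * (rb + δ) ^ (n - k))) :=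
                mul_le_mul_of_nonneg_left
                  (mul_le_mul (hM k) (hM' (n - k)) (norm_nonneg _)
                    (mul_nonneg (by linarith) (by positivity)))
                  (Nat.cast_nonneg _)
            _ = _ := by ring
      _ = (M * M') * ∑ k ∈ range (n + 1),
            (ra + δ) ^ k * (rb + δ) ^ (n - k) * (n.choose k : ℝ) := by
          rw [Finset.mul_sum]; congr 1; ext k; ring
      _ = (M * M') * C ^ n := by
          rw [← add_pow (ra + δ) (rb + δ) n]
          congr 2
          rw [hC, hδdef]; ring
  have hMM' : (0:ℝ) < M * M' := by positivity
  have hxy : ∀ᶠ n : ℕ in atTop,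
      ‖(a + b) ^ n‖ ^ (1 / (n:ℕ) : ℝ) ≤ (M * M') ^ (1 / (n:ℕ) : ℝ) * C := by
    filter_upwards [eventually_ge_atTop 1] with n hn1
    have hnne : (n : ℝ) ≠ 0 := (Nat.cast_pos.mpr hn1).ne'
    calc ‖(a + b) ^ n‖ ^ (1 / n : ℝ)
        ≤ ((M * M') * C ^ n) ^ (1 / n : ℝ) :=
          Real.rpow_le_rpow (norm_nonneg _) (key n) (by positivity)
      _ = (M * M') ^ (1 / n : ℝ) * (C ^ n) ^ (1 / n : ℝ) :=
          Real.mul_rpow hMM'.le (by positivity)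
      _ = (M * M') ^ (1 / n : ℝ) * C := by
          rw [← Real.rpow_natCast C n, ← Real.rpow_mul hC0.le,
            mul_one_div, div_self hnne, Real.rpow_one]
  have h1 : Tendsto (fun n : ℕ => (M * M') ^ (1 / n : ℝ)) atTop (𝓝 1) := by
    have := (Real.continuousAt_const_rpow (a := M * M') (b := 0)
      hMM'.ne').tendsto.comp tendsto_one_div_atTop_nhds_zero_nat
    simpa [Function.comp_def] using this
  have hy : Tendsto (fun n : ℕ => (M * M') ^ (1 / n : ℝ) * C) atTop (𝓝 C) := by
    simpa using h1.mul_const C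
  exact le_of_tendsto_of_tendsto (gelfand_real (a + b)) hy hxy

end Aux2

/-- If `Vₙ → V` in operator norm and each `Vₙ` commutes with `V`, then
`r(Vₙ) → r(V)`. -/
theorem tendsto_spectralRadius_of_tendsto_of_commute
    {H : Type*} [NormedAddCommGroup H] [InnerProductSpace ℂ H] [CompleteSpace H]
    (V : ℕ → H →L[ℂ] H) (W : H →L[ℂ] H)
    (hlim : Filter.Tendsto V Filter.atTop (nhds W))
    (hcomm : ∀ n : ℕ, V n * W = W * V n) :
    Filter.Tendsto (fun n => (spectralRadius ℂ (V n)).toReal) Filter.atTop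
      (nhds ((spectralRadius ℂ W).toReal)) := by
  have key : ∀ n, |(spectralRadius ℂ (V n)).toReal - (spectralRadius ℂ W).toReal|
      ≤ ‖V n - W‖ := by
    intro n
    have hc : Commute (V n) W := hcomm n
    rw [abs_sub_le_iff]
    constructor
    · have h1 : (spectralRadius ℂ (V n)).toReal
          ≤ (spectralRadius ℂ W).toReal + (spectralRadius ℂ (V n - W)).toReal := by
        have := specRad_add_le (a := W) (b := V n - W)
          (hc.symm.sub_right (Commute.refl W))
        simpa using this
      have h2 := specRad_toReal_le_norm (V n - W)
      linarith
    · have h1 : (spectralRadius ℂ W).toReal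
          ≤ (spectralRadius ℂ (V n)).toReal + (spectralRadius ℂ (W - V n)).toReal := by
        have := specRad_add_le (a := V n) (b := W - V n)
          (hc.sub_right (Commute.refl (V n)))
        simpa using this
      have h2 := specRad_toReal_le_norm (W - V n)
      rw [norm_sub_rev] at h2
      linarith
  have hnorm : Tendsto (fun n => ‖V n - W‖) atTop (𝓝 0) := by
    rw [tendsto_iff_norm_sub_tendsto_zero] at hlim
    exact hlim
  rw [tendsto_iff_norm_sub_tendsto_zero]
  refine squeeze_zero (fun n => norm_nonneg _) ?_ hnorm
  intro n
  simpa [Real.norm_eq_abs] using key n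
end

section
/- Let f(z) = ∑_{n=0}^∞ a_n z^n be a power series with complex coefficients convergent on the open disk D(0,R) ⊂ ℂ with R > 0, and let f_a(z) := ∑_{n=0}^∞ |a_n| z^n. Let A, B be commuting bounded linear operators on a complex Hilbert space H, and let p > 1, q > 1 with 1/p + 1/q = 1. If ‖A‖^p < R and ‖B‖^q < R, then r(f(AB)) ≤ f_a(r(A)^p)^{1/p} · f_a(r(B)^q)^{1/q}. -/
open scoped ENNReal NNReal

lemma aux_summable_abs (a : ℕ → ℂ) (R : ℝ)
    (hconv : ∀ z : ℂ, ‖z‖ < R → Summable fun n : ℕ => a n * z ^ n)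
    {x : ℝ} (hx0 : 0 ≤ x) (hx : x < R) :
    Summable fun n : ℕ => ‖a n‖ * x ^ n := by
  set t : ℝ := (x + R) / 2 with ht
  have hxt : x < t := by rw [ht]; linarith
  have htR : t < R := by rw [ht]; linarith
  have ht0 : 0 < t := by linarith
  have hs := hconv (t : ℂ) (by rwa [Complex.norm_real, Real.norm_eq_abs, abs_of_pos ht0])
  obtain ⟨C, hC⟩ := hs.tendsto_atTop_zero.norm.bddAbove_range
  have hCle : ∀ n : ℕ, ‖a n‖ * t ^ n ≤ C := by
    intro n
    have := hC (Set.mem_range_self n)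
    rwa [norm_mul, norm_pow, Complex.norm_real, Real.norm_eq_abs, abs_of_pos ht0] at this
  have hgeo : Summable fun n : ℕ => C * (x / t) ^ n :=
    (summable_geometric_of_lt_one (by positivity) ((div_lt_one ht0).mpr hxt)).mul_left C
  refine Summable.of_nonneg_of_le (fun n => by positivity) (fun n => ?_) hgeo
  have hxn : x ^ n = t ^ n * (x / t) ^ n := by
    rw [← mul_pow, mul_div_cancel₀ _ ht0.ne']
  calc ‖a n‖ * x ^ n = ‖a n‖ * t ^ n * (x / t) ^ n := by rw [hxn]; ring
    _ ≤ C * (x / t) ^ n :=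
        mul_le_mul_of_nonneg_right (hCle n) (by positivity)

lemma aux_spectralRadius_coe_le {𝕜 A : Type*} [NormedField 𝕜] [NormedRing A]
    [NormedAlgebra 𝕜 A] (S : Subalgebra 𝕜 A) (x : S) :
    spectralRadius 𝕜 (x : A) ≤ spectralRadius 𝕜 x := by
  unfold spectralRadius
  exact iSup₂_le fun k hk =>
    le_iSup₂ (f := fun k (_ : k ∈ spectrum 𝕜 x) => (‖k‖₊ : ℝ≥0∞)) k
      (spectrum.subset_subalgebra x hk)

lemma aux_pow_identity {c x r : ℝ} (hc : 0 ≤ c) (hx : 0 ≤ x) (hr : 0 < r) (n : ℕ) :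
    (c ^ (1/r) * x ^ n) ^ r = c * (x ^ r) ^ n := by
  have h1 : ((c : ℝ) ^ (1/r)) ^ r = c := by
    rw [← Real.rpow_mul hc, one_div, inv_mul_cancel₀ hr.ne', Real.rpow_one]
  have h2 : ((x : ℝ) ^ n) ^ r = (x ^ r) ^ n := by
    rw [← Real.rpow_natCast x n, ← Real.rpow_mul hx, mul_comm (n : ℝ) r,
      Real.rpow_mul hx, Real.rpow_natCast]
  rw [Real.mul_rpow (Real.rpow_nonneg hc _) (pow_nonneg hx _), h1, h2]

lemma aux_mul_identity {c x y p q : ℝ} (hc : 0 ≤ c) (hpq : 1/p + 1/q = 1) (n : ℕ) :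
    (c ^ (1/p) * x ^ n) * (c ^ (1/q) * y ^ n) = c * (x * y) ^ n := by
  have h : c ^ (1/p) * c ^ (1/q) = c := by
    rw [← Real.rpow_add' hc (by rw [hpq]; exact one_ne_zero), hpq, Real.rpow_one]
  calc (c ^ (1/p) * x ^ n) * (c ^ (1/q) * y ^ n)
      = (c ^ (1/p) * c ^ (1/q)) * (x ^ n * y ^ n) := by ring
    _ = c * (x * y) ^ n := by rw [h, mul_pow]

set_option maxHeartbeats 1000000 in
set_option synthInstance.maxHeartbeats 400000 in
/-- For commuting `A`, `B` with `‖A‖^p < R`, `‖B‖^q < R` (conjugate exponents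
`p, q`), one has `r(f(AB)) ≤ f_a(r(A)^p)^{1/p} · f_a(r(B)^q)^{1/q}`. -/
theorem spectralRadius_powerSeries_mul_le_holder
    {H : Type*} [NormedAddCommGroup H] [InnerProductSpace ℂ H] [CompleteSpace H]
    (a : ℕ → ℂ) (R : ℝ) (hR : 0 < R)
    (hconv : ∀ z : ℂ, ‖z‖ < R → Summable fun n : ℕ => a n * z ^ n)
    (A B : H →L[ℂ] H) (hcomm : A * B = B * A)
    (p q : ℝ) (hp : 1 < p) (hq : 1 < q) (hpq : 1 / p + 1 / q = 1)
    (hA : ‖A‖ ^ p < R) (hB : ‖B‖ ^ q < R) :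
    (spectralRadius ℂ (∑' n : ℕ, a n • (A * B) ^ n)).toReal ≤
      (∑' n : ℕ, ‖a n‖ * ((spectralRadius ℂ A).toReal ^ p) ^ n) ^ (1 / p) *
        (∑' n : ℕ, ‖a n‖ * ((spectralRadius ℂ B).toReal ^ q) ^ n) ^ (1 / q) := by
  have hp0 : (0:ℝ) < p := lt_trans one_pos hp
  have hq0 : (0:ℝ) < q := lt_trans one_pos hq
  have hpq' : Real.HolderConjugate p q := ⟨by rw [inv_one, ← one_div, ← one_div]; exact hpq, hp0, hq0⟩
  set rA : ℝ := (spectralRadius ℂ A).toReal with hrA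
  set rB : ℝ := (spectralRadius ℂ B).toReal with hrB
  have hrA0 : 0 ≤ rA := ENNReal.toReal_nonneg
  have hrB0 : 0 ≤ rB := ENNReal.toReal_nonneg
  have hRHS0 : 0 ≤ (∑' n : ℕ, ‖a n‖ * (rA ^ p) ^ n) ^ (1 / p) *
      (∑' n : ℕ, ‖a n‖ * (rB ^ q) ^ n) ^ (1 / q) := by
    apply mul_nonneg <;>
      exact Real.rpow_nonneg (tsum_nonneg fun n => by positivity) _
  rcases subsingleton_or_nontrivial H with hH | hH
  · haveI : Subsingleton (H →L[ℂ] H) :=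
      ⟨fun f g => ContinuousLinearMap.ext fun x => Subsingleton.elim _ _⟩
    have h0 : spectrum ℂ (∑' n : ℕ, a n • (A * B) ^ n) = ∅ := by
      ext z
      simp [spectrum.mem_iff, isUnit_of_subsingleton]
    unfold spectralRadius
    rw [h0]
    simpa using hRHS0
  -- main case
  have hABmem : ∀ x ∈ ({A, B} : Set (H →L[ℂ] H)), ∀ y ∈ ({A, B} : Set (H →L[ℂ] H)),
      x * y = y * x := by
    intro x hx y hy
    simp only [Set.mem_insert_iff, Set.mem_singleton_iff] at hx hy
    rcases hx with rfl | rfl <;> rcases hy with rfl | rfl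
    · rfl
    · exact hcomm
    · exact hcomm.symm
    · rfl
  set S : Subalgebra ℂ (H →L[ℂ] H) :=
    (Algebra.adjoin ℂ ({A, B} : Set (H →L[ℂ] H))).topologicalClosure with hSdef
  have hScomm : ∀ x y : S, x * y = y * x := by
    letI h1 : CommRing (Algebra.adjoin ℂ ({A, B} : Set (H →L[ℂ] H))) :=
      Algebra.adjoinCommRingOfComm ℂ hABmem
    letI h2 : CommRing S :=
      Subalgebra.commRingTopologicalClosure _ fun x y => mul_comm x y
    exact fun x y => mul_comm x y
  letI : NormedCommRing S := { (inferInstance : NormedRing S) with mul_comm := hScomm }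
  haveI : CompleteSpace S :=
    (Subalgebra.isClosed_topologicalClosure _).completeSpace_coe
  have hAmem : A ∈ S :=
    (Algebra.adjoin ℂ ({A, B} : Set (H →L[ℂ] H))).le_topologicalClosure
      (Algebra.subset_adjoin (by simp))
  have hBmem : B ∈ S :=
    (Algebra.adjoin ℂ ({A, B} : Set (H →L[ℂ] H))).le_topologicalClosure
      (Algebra.subset_adjoin (by simp))
  set u : S := ⟨A, hAmem⟩ with hu
  set v : S := ⟨B, hBmem⟩ with hv
  -- spectral radius in S equals spectral radius in the big algebra
  have hrad : ∀ x : S, spectralRadius ℂ x = spectralRadius ℂ (x : H →L[ℂ] H) := by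
    intro x
    refine tendsto_nhds_unique ?_
      (spectrum.pow_nnnorm_pow_one_div_tendsto_nhds_spectralRadius (x : H →L[ℂ] H))
    have h := spectrum.pow_nnnorm_pow_one_div_tendsto_nhds_spectralRadius x
    have hfun : (fun n : ℕ => (‖x ^ n‖₊ : ℝ≥0∞) ^ (1 / (n:ℝ))) =
        fun n : ℕ => (‖(x : H →L[ℂ] H) ^ n‖₊ : ℝ≥0∞) ^ (1 / (n:ℝ)) := by
      funext n
      have hxx : ‖x ^ n‖₊ = ‖(x : H →L[ℂ] H) ^ n‖₊ := by
        rw [← SubmonoidClass.coe_pow]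
        rfl
      rw [hxx]
    rwa [hfun] at h
  have hfinA : spectralRadius ℂ A ≠ ⊤ :=
    (lt_of_le_of_lt (spectrum.spectralRadius_le_nnnorm A) ENNReal.coe_lt_top).ne
  have hfinB : spectralRadius ℂ B ≠ ⊤ :=
    (lt_of_le_of_lt (spectrum.spectralRadius_le_nnnorm B) ENNReal.coe_lt_top).ne
  have hrAle : rA ≤ ‖A‖ := by
    have := ENNReal.toReal_mono ENNReal.coe_ne_top (spectrum.spectralRadius_le_nnnorm (𝕜 := ℂ) A)
    simpa using this
  have hrBle : rB ≤ ‖B‖ := by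
    have := ENNReal.toReal_mono ENNReal.coe_ne_top (spectrum.spectralRadius_le_nnnorm (𝕜 := ℂ) B)
    simpa using this
  -- character bounds
  have hφu : ∀ φ : WeakDual.characterSpace ℂ S, ‖φ u‖ ≤ rA := by
    intro φ
    have hmem : φ u ∈ spectrum ℂ u := AlgHom.apply_mem_spectrum φ u
    have h1 : (‖φ u‖₊ : ℝ≥0∞) ≤ spectralRadius ℂ u :=
      le_iSup₂ (f := fun k (_ : k ∈ spectrum ℂ u) => (‖k‖₊ : ℝ≥0∞)) _ hmem
    rw [hrad u] at h1
    have := ENNReal.toReal_mono hfinA h1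
    simpa using this
  have hφv : ∀ φ : WeakDual.characterSpace ℂ S, ‖φ v‖ ≤ rB := by
    intro φ
    have hmem : φ v ∈ spectrum ℂ v := AlgHom.apply_mem_spectrum φ v
    have h1 : (‖φ v‖₊ : ℝ≥0∞) ≤ spectralRadius ℂ v :=
      le_iSup₂ (f := fun k (_ : k ∈ spectrum ℂ v) => (‖k‖₊ : ℝ≥0∞)) _ hmem
    rw [hrad v] at h1
    have := ENNReal.toReal_mono hfinB h1
    simpa using this
  -- norms and summability
  have hABR : ‖A‖ * ‖B‖ < R := by
    calc ‖A‖ * ‖B‖ ≤ ‖A‖ ^ p / p + ‖B‖ ^ q / q :=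
          Real.young_inequality_of_nonneg (norm_nonneg A) (norm_nonneg B) hpq'
      _ < R / p + R / q := by gcongr
      _ = R := by
          have h : R / p + R / q = R * (1/p + 1/q) := by ring
          rw [h, hpq, mul_one]
  have hABlt : ‖A * B‖ < R := lt_of_le_of_lt (norm_mul_le A B) hABR
  have hrArB : rA * rB < R :=
    lt_of_le_of_lt (mul_le_mul hrAle hrBle hrB0 (norm_nonneg A)) hABR
  have hmid : Summable fun n : ℕ => ‖a n‖ * (rA * rB) ^ n :=
    aux_summable_abs a R hconv (by positivity) hrArB
  have sumA : Summable fun n : ℕ => ‖a n‖ * (rA ^ p) ^ n :=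
    aux_summable_abs a R hconv (Real.rpow_nonneg hrA0 _)
      (lt_of_le_of_lt (Real.rpow_le_rpow hrA0 hrAle hp0.le) hA)
  have sumB : Summable fun n : ℕ => ‖a n‖ * (rB ^ q) ^ n :=
    aux_summable_abs a R hconv (Real.rpow_nonneg hrB0 _)
      (lt_of_le_of_lt (Real.rpow_le_rpow hrB0 hrBle hq0.le) hB)
  -- Hölder
  have hsum_fp : Summable fun n : ℕ => (‖a n‖ ^ (1/p) * rA ^ n) ^ p :=
    sumA.congr fun n => (aux_pow_identity (norm_nonneg _) hrA0 hp0 n).symm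
  have hsum_gq : Summable fun n : ℕ => (‖a n‖ ^ (1/q) * rB ^ n) ^ q :=
    sumB.congr fun n => (aux_pow_identity (norm_nonneg _) hrB0 hq0 n).symm
  have hHolder : ∑' n : ℕ, ‖a n‖ * (rA * rB) ^ n ≤
      (∑' n : ℕ, ‖a n‖ * (rA ^ p) ^ n) ^ (1 / p) *
        (∑' n : ℕ, ‖a n‖ * (rB ^ q) ^ n) ^ (1 / q) := by
    have hH := Real.inner_le_Lp_mul_Lq_tsum_of_nonneg hpq'
      (f := fun n => ‖a n‖ ^ (1/p) * rA ^ n) (g := fun n => ‖a n‖ ^ (1/q) * rB ^ n)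
      (fun n => by positivity) (fun n => by positivity) hsum_fp hsum_gq
    calc ∑' n : ℕ, ‖a n‖ * (rA * rB) ^ n
        = ∑' n : ℕ, (‖a n‖ ^ (1/p) * rA ^ n) * (‖a n‖ ^ (1/q) * rB ^ n) :=
          tsum_congr fun n => (aux_mul_identity (norm_nonneg _) hpq n).symm
      _ ≤ (∑' n : ℕ, (‖a n‖ ^ (1/p) * rA ^ n) ^ p) ^ (1/p) *
            (∑' n : ℕ, (‖a n‖ ^ (1/q) * rB ^ n) ^ q) ^ (1/q) := hH
      _ = (∑' n : ℕ, ‖a n‖ * (rA ^ p) ^ n) ^ (1 / p) *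
            (∑' n : ℕ, ‖a n‖ * (rB ^ q) ^ n) ^ (1 / q) := by
          rw [tsum_congr fun n => aux_pow_identity (norm_nonneg (a n)) hrA0 hp0 n,
            tsum_congr fun n => aux_pow_identity (norm_nonneg (a n)) hrB0 hq0 n]
  -- the series in S
  have hnormle : ∀ n : ℕ, ‖a n • (u * v) ^ n‖ ≤ ‖a n‖ * ‖A * B‖ ^ n := by
    intro n
    rw [norm_smul]
    have hcoe : ‖(u * v) ^ n‖ = ‖(A * B) ^ n‖ := by
      change ‖(((u * v) ^ n : S) : H →L[ℂ] H)‖ = _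
      rw [SubmonoidClass.coe_pow]
      rfl
    rw [hcoe]
    exact mul_le_mul_of_nonneg_left (norm_pow_le (A * B) n) (norm_nonneg _)
  have hSsum : Summable fun n : ℕ => a n • (u * v) ^ n := by
    apply Summable.of_norm
    exact Summable.of_nonneg_of_le (fun n => norm_nonneg _) hnormle
      (aux_summable_abs a R hconv (norm_nonneg _) hABlt)
  set w : S := ∑' n : ℕ, a n • (u * v) ^ n with hwdef
  have hws : HasSum (fun n : ℕ => a n • (u * v) ^ n) w := hSsum.hasSum
  have hcoe : (w : H →L[ℂ] H) = ∑' n : ℕ, a n • (A * B) ^ n := by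
    have hmap := hws.map (S.val : S →ₐ[ℂ] (H →L[ℂ] H)).toRingHom.toAddMonoidHom
      continuous_subtype_val
    have heq : (fun n : ℕ =>
        (S.val : S →ₐ[ℂ] (H →L[ℂ] H)).toRingHom.toAddMonoidHom (a n • (u * v) ^ n)) =
        fun n : ℕ => a n • (A * B) ^ n := by
      funext n
      simp [hu, hv]
    rw [Function.comp_def, heq] at hmap
    exact hmap.tsum_eq.symm
  rw [← hcoe]
  have hupper : spectralRadius ℂ (w : H →L[ℂ] H) ≤
      ENNReal.ofReal ((∑' n : ℕ, ‖a n‖ * (rA ^ p) ^ n) ^ (1 / p) *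
        (∑' n : ℕ, ‖a n‖ * (rB ^ q) ^ n) ^ (1 / q)) := by
    refine le_trans (aux_spectralRadius_coe_le S w) ?_
    unfold spectralRadius
    refine iSup₂_le fun k hk => ?_
    obtain ⟨φ, hφ⟩ := WeakDual.CharacterSpace.mem_spectrum_iff_exists.mp hk
    have hφw : HasSum (fun n : ℕ => a n * (φ u * φ v) ^ n) (φ w) := by
      have h := hws.map (AddMonoidHomClass.toAddMonoidHom φ) (map_continuous φ)
      have heq : (fun n : ℕ =>
          (AddMonoidHomClass.toAddMonoidHom φ) (a n • (u * v) ^ n)) =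
          fun n : ℕ => a n * (φ u * φ v) ^ n := by
        funext n
        simp [map_smul, smul_eq_mul, map_pow, map_mul]
      rwa [Function.comp_def, heq] at h
    have hterm : ∀ n : ℕ, ‖a n * (φ u * φ v) ^ n‖ ≤ ‖a n‖ * (rA * rB) ^ n := by
      intro n
      rw [norm_mul, norm_pow, norm_mul]
      gcongr
      all_goals
        first
        | exact hφu φ
        | exact hφv φ
        | exact norm_nonneg _
        | exact hrA0
        | exact hrB0
        | positivity
    have hnorms : Summable fun n : ℕ => ‖a n * (φ u * φ v) ^ n‖ :=
      Summable.of_nonneg_of_le (fun n => norm_nonneg _) hterm hmid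
    have hknorm : ‖k‖ ≤ ∑' n : ℕ, ‖a n‖ * (rA * rB) ^ n := by
      rw [← hφ, ← hφw.tsum_eq]
      exact le_trans (norm_tsum_le_tsum_norm hnorms) (hnorms.tsum_le_tsum hterm hmid)
    calc (‖k‖₊ : ℝ≥0∞) = ENNReal.ofReal ‖k‖ := (ofReal_norm k).symm
      _ ≤ _ := ENNReal.ofReal_le_ofReal (hknorm.trans hHolder)
  calc (spectralRadius ℂ (w : H →L[ℂ] H)).toReal
      ≤ (ENNReal.ofReal ((∑' n : ℕ, ‖a n‖ * (rA ^ p) ^ n) ^ (1 / p) *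
          (∑' n : ℕ, ‖a n‖ * (rB ^ q) ^ n) ^ (1 / q))).toReal :=
        ENNReal.toReal_mono ENNReal.ofReal_ne_top hupper
    _ ≤ _ := le_of_eq (ENNReal.toReal_ofReal hRHS0)
end

section
/- Let f(z) = ∑_{n=0}^∞ a_n z^n be a power series with complex coefficients convergent on the open disk D(0,R) ⊂ ℂ with R > 0, and let f_a(z) := ∑_{n=0}^∞ |a_n| z^n. Let A, B be commuting bounded linear operators on a complex Hilbert space H, and let p > 1, q > 1 with 1/p + 1/q = 1. If ‖A‖^p < R and ‖B‖^q < R, and if f_a(r(A)^{p−1} r(B)^{q−1}) ≠ 0, then r(f(AB)) ≤ f_a(r(A)^p) · f_a(r(B)^q) / f_a(r(A)^{p−1} r(B)^{q−1}). -/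
open Filter Topology Real
open scoped ENNReal NNReal

namespace DragomirSandor

lemma summable_coeff {a : ℕ → ℂ} {R : ℝ}
    (hconv : ∀ z : ℂ, ‖z‖ < R → Summable fun n : ℕ => a n * z ^ n)
    {t : ℝ} (ht : 0 ≤ t) (htR : t < R) :
    Summable fun n : ℕ => ‖a n‖ * t ^ n := by
  set r : ℝ := (t + R) / 2 with hr
  have htr : t < r := by simp only [hr]; linarith
  have hr0 : 0 < r := lt_of_le_of_lt ht htr
  have hrR : r < R := by simp only [hr]; linarith
  have hz : ‖(r : ℂ)‖ < R := by
    rwa [Complex.norm_real, Real.norm_eq_abs, abs_of_nonneg hr0.le]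
  have hs := hconv (r : ℂ) hz
  have hbd : BddAbove (Set.range fun n : ℕ => ‖a n * (r : ℂ) ^ n‖) :=
    (hs.tendsto_atTop_zero.norm.bddAbove_range)
  obtain ⟨C, hC⟩ := hbd
  have hC' : ∀ n : ℕ, ‖a n‖ * r ^ n ≤ C := by
    intro n
    have := hC (Set.mem_range_self (f := fun n : ℕ => ‖a n * (r : ℂ) ^ n‖) n)
    simpa [norm_mul, norm_pow, Complex.norm_real, Real.norm_eq_abs,
      abs_of_nonneg hr0.le] using this
  have hgeo : Summable fun n : ℕ => C * (t / r) ^ n := by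
    refine Summable.mul_left _ (summable_geometric_of_lt_one (by positivity) ?_)
    rw [div_lt_one hr0]; exact htr
  refine Summable.of_nonneg_of_le (fun n => by positivity) (fun n => ?_) hgeo
  have : ‖a n‖ * t ^ n = (‖a n‖ * r ^ n) * (t / r) ^ n := by
    rw [mul_assoc, ← mul_pow, mul_div_assoc', mul_div_cancel_left₀ t hr0.ne']
  rw [this]
  exact mul_le_mul_of_nonneg_right (hC' n) (by positivity)

variable {E : Type*} [NormedRing E] [NormedAlgebra ℂ E] [CompleteSpace E] [NormOneClass E]

lemma tendsto_norm_pow_one_div (M : E) :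
    Tendsto (fun n : ℕ => ‖M ^ n‖ ^ (1 / (n : ℝ))) atTop
      (𝓝 (spectralRadius ℂ M).toReal) := by
  have hfin : spectralRadius ℂ M ≠ ⊤ :=
    ((spectrum.spectralRadius_le_nnnorm (𝕜 := ℂ) M).trans_lt ENNReal.coe_lt_top).ne
  have h := spectrum.pow_norm_pow_one_div_tendsto_nhds_spectralRadius M
  have h2 := (ENNReal.tendsto_toReal hfin).comp h
  refine h2.congr fun n => ?_
  simp only [Function.comp_apply]
  rw [ENNReal.toReal_ofReal (by positivity)]

lemma exists_norm_pow_le (M : E) {ε : ℝ} (hε : 0 < ε) :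
    ∃ C : ℝ, 1 ≤ C ∧ ∀ n : ℕ,
      ‖M ^ n‖ ≤ C * ((spectralRadius ℂ M).toReal + ε) ^ n := by
  set x : ℝ := (spectralRadius ℂ M).toReal with hx
  have hx0 : 0 ≤ x := ENNReal.toReal_nonneg
  have hxε : 0 < x + ε := by linarith
  have h := tendsto_norm_pow_one_div M
  have hev : ∀ᶠ n : ℕ in atTop, ‖M ^ n‖ ^ (1 / (n : ℝ)) < x + ε :=
    h.eventually_lt_const (by linarith)
  obtain ⟨N, hN⟩ := hev.exists_forall_of_atTop
  have hterm : ∀ n : ℕ, 0 ≤ ‖M ^ n‖ / (x + ε) ^ n := fun n => by positivity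
  have hS : 0 ≤ ∑ n ∈ Finset.range (N + 1), ‖M ^ n‖ / (x + ε) ^ n :=
    Finset.sum_nonneg fun n _ => hterm n
  set C : ℝ := 1 + ∑ n ∈ Finset.range (N + 1), ‖M ^ n‖ / (x + ε) ^ n with hC
  have hC1 : 1 ≤ C := by rw [hC]; linarith
  refine ⟨C, hC1, fun n => ?_⟩
  rcases lt_or_ge n (N + 1) with hn | hn
  · have hmem : n ∈ Finset.range (N + 1) := Finset.mem_range.mpr hn
    have h1 : ‖M ^ n‖ / (x + ε) ^ n ≤ C := by
      have := Finset.single_le_sum (f := fun n => ‖M ^ n‖ / (x + ε) ^ n)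
        (fun i _ => hterm i) hmem
      rw [hC]; linarith
    calc ‖M ^ n‖ = (‖M ^ n‖ / (x + ε) ^ n) * (x + ε) ^ n := by
          field_simp
      _ ≤ C * (x + ε) ^ n := by
          exact mul_le_mul_of_nonneg_right h1 (by positivity)
  · have hn1 : 1 ≤ n := le_trans (Nat.le_add_left 1 N) hn
    have hnn : (0:ℝ) < (n : ℝ) := by exact_mod_cast hn1
    have hroot : ‖M ^ n‖ ^ (1 / (n : ℝ)) < x + ε := hN n (by omega)
    have : ‖M ^ n‖ < (x + ε) ^ n := by
      have h2 : (‖M ^ n‖ ^ (1 / (n : ℝ))) ^ n < (x + ε) ^ n := by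
        apply pow_lt_pow_left₀ hroot (by positivity) (by omega)
      rwa [one_div, Real.rpow_inv_natCast_pow (norm_nonneg _) (by omega)] at h2
    calc ‖M ^ n‖ ≤ (x + ε) ^ n := this.le
      _ ≤ C * (x + ε) ^ n := le_mul_of_one_le_left (by positivity) hC1

omit [NormOneClass E] in
lemma norm_pow_tsum_le (a : ℕ → ℂ) (M : E) (C s : ℝ) (hs : 0 ≤ s)
    (hM : ∀ n : ℕ, ‖M ^ n‖ ≤ C * s ^ n)
    (hsum : Summable fun n : ℕ => ‖a n‖ * s ^ n) :
    ∀ j : ℕ, ‖(∑' n : ℕ, a n • M ^ n) ^ j‖ ≤ C * (∑' n : ℕ, ‖a n‖ * s ^ n) ^ j := by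
  set T : E := ∑' n : ℕ, a n • M ^ n with hT
  set F : ℝ := ∑' n : ℕ, ‖a n‖ * s ^ n with hF
  have hF0 : 0 ≤ F := tsum_nonneg fun n => by positivity
  have hsummand : Summable fun n : ℕ => a n • M ^ n := by
    apply Summable.of_norm
    refine Summable.of_nonneg_of_le (fun n => norm_nonneg _) (fun n => ?_)
      (hsum.mul_left C)
    rw [norm_smul]
    calc ‖a n‖ * ‖M ^ n‖ ≤ ‖a n‖ * (C * s ^ n) :=
          mul_le_mul_of_nonneg_left (hM n) (norm_nonneg _)
      _ = C * (‖a n‖ * s ^ n) := by ring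
  have hMT : Commute M T := by
    apply Commute.tsum_right
    intro n
    exact ((Commute.refl M).pow_right n).smul_right (a n)
  have key : ∀ j k : ℕ, ‖T ^ j * M ^ k‖ ≤ C * s ^ k * F ^ j := by
    intro j
    induction j with
    | zero =>
      intro k
      simpa using hM k
    | succ j ih =>
      intro k
      have hcomm : ∀ n : ℕ, (a n • M ^ n) * (T ^ j * M ^ k) =
          a n • (T ^ j * M ^ (n + k)) := by
        intro n
        have h1 : M ^ n * T ^ j = T ^ j * M ^ n := (hMT.pow_pow n j).eq
        rw [smul_mul_assoc]
        congr 1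
        rw [← mul_assoc, h1, mul_assoc, ← pow_add]
      have hTsucc : T ^ (j + 1) * M ^ k = ∑' n : ℕ, a n • (T ^ j * M ^ (n + k)) := by
        rw [pow_succ']
        rw [mul_assoc, hT]
        rw [← hsummand.tsum_mul_right (T ^ j * M ^ k)]
        exact tsum_congr fun n => by rw [← hT, hcomm n]
      have hbnd : ∀ n : ℕ, ‖a n • (T ^ j * M ^ (n + k))‖ ≤
          (C * s ^ k * F ^ j) * (‖a n‖ * s ^ n) := by
        intro n
        rw [norm_smul]
        calc ‖a n‖ * ‖T ^ j * M ^ (n + k)‖ ≤ ‖a n‖ * (C * s ^ (n + k) * F ^ j) :=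
              mul_le_mul_of_nonneg_left (ih (n + k)) (norm_nonneg _)
          _ = (C * s ^ k * F ^ j) * (‖a n‖ * s ^ n) := by rw [pow_add]; ring
      have hsumm2 : Summable fun n : ℕ => ‖a n • (T ^ j * M ^ (n + k))‖ :=
        Summable.of_nonneg_of_le (fun n => norm_nonneg _) hbnd
          (hsum.mul_left _)
      rw [hTsucc]
      calc ‖∑' n : ℕ, a n • (T ^ j * M ^ (n + k))‖
          ≤ ∑' n : ℕ, ‖a n • (T ^ j * M ^ (n + k))‖ := norm_tsum_le_tsum_norm hsumm2
        _ ≤ ∑' n : ℕ, (C * s ^ k * F ^ j) * (‖a n‖ * s ^ n) :=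
            Summable.tsum_le_tsum hbnd hsumm2 (hsum.mul_left _)
        _ = C * s ^ k * F ^ (j + 1) := by
            rw [tsum_mul_left, ← hF, pow_succ]; ring
  intro j
  have := key j 0
  simpa using this

lemma spectralRadius_toReal_le_of_norm_pow_le (T : E) (C F : ℝ) (hC : 0 < C) (hF : 0 ≤ F)
    (h : ∀ j : ℕ, ‖T ^ j‖ ≤ C * F ^ j) :
    (spectralRadius ℂ T).toReal ≤ F := by
  have hfin : spectralRadius ℂ T ≠ ⊤ :=
    ((spectrum.spectralRadius_le_nnnorm (𝕜 := ℂ) T).trans_lt ENNReal.coe_lt_top).ne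
  have hle : ∀ n : ℕ, (spectralRadius ℂ T).toReal ≤ C ^ (1 / ((n : ℝ) + 1)) * F := by
    intro n
    have h1 := spectrum.spectralRadius_le_pow_nnnorm_pow_one_div ℂ T n
    rw [nnnorm_one, ENNReal.coe_one, ENNReal.one_rpow, mul_one] at h1
    have h2 : (spectralRadius ℂ T).toReal ≤
        (((‖T ^ (n + 1)‖₊ : ℝ≥0∞)) ^ (1 / ((n : ℝ) + 1))).toReal := by
      apply ENNReal.toReal_mono _ (by exact_mod_cast h1)
      simp only [Ne, ENNReal.rpow_eq_top_iff, not_or]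
      constructor
      · rintro ⟨-, h0⟩
        have : (0:ℝ) < 1 / ((n : ℝ) + 1) := by positivity
        exact absurd h0 this.not_gt
      · rintro ⟨htop, -⟩
        exact ENNReal.coe_ne_top htop
    have h3 : (((‖T ^ (n + 1)‖₊ : ℝ≥0∞)) ^ (1 / ((n : ℝ) + 1))).toReal =
        ‖T ^ (n + 1)‖ ^ (1 / ((n : ℝ) + 1)) := by
      rw [← ENNReal.toReal_rpow]
      simp
    rw [h3] at h2
    refine h2.trans ?_
    have h4 : ‖T ^ (n + 1)‖ ^ (1 / ((n : ℝ) + 1)) ≤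
        (C * F ^ (n + 1)) ^ (1 / ((n : ℝ) + 1)) :=
      Real.rpow_le_rpow (norm_nonneg _) (h (n + 1)) (by positivity)
    refine h4.trans_eq ?_
    rw [Real.mul_rpow hC.le (by positivity)]
    congr 1
    have : ((n : ℝ) + 1) = ((n + 1 : ℕ) : ℝ) := by push_cast; ring
    rw [this, one_div, Real.pow_rpow_inv_natCast hF (by omega)]
  have htend : Tendsto (fun n : ℕ => C ^ (1 / ((n : ℝ) + 1)) * F) atTop (𝓝 F) := by
    have h1 : Tendsto (fun n : ℕ => Real.log C * (1 / ((n : ℝ) + 1))) atTop (𝓝 0) := by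
      rw [show (0:ℝ) = Real.log C * 0 by ring]
      exact tendsto_const_nhds.mul (tendsto_one_div_add_atTop_nhds_zero_nat)
    have h2 : Tendsto (fun n : ℕ => C ^ (1 / ((n : ℝ) + 1))) atTop (𝓝 1) := by
      have := (Real.continuous_exp.tendsto 0).comp h1
      rw [Real.exp_zero] at this
      refine this.congr fun n => ?_
      rw [Function.comp_apply, ← Real.rpow_def_of_pos hC]
    have := h2.mul_const F
    rwa [one_mul] at this
  exact ge_of_tendsto' htend hle

lemma exists_eps (a : ℕ → ℂ) {R : ℝ}
    (hconv : ∀ z : ℂ, ‖z‖ < R → Summable fun n : ℕ => a n * z ^ n)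
    {x y : ℝ} (hx : 0 ≤ x) (hy : 0 ≤ y) (hxyR : x * y < R)
    {δ : ℝ} (hδ : 0 < δ) :
    ∃ ε : ℝ, 0 < ε ∧ (x + ε) * (y + ε) < R ∧
      (∑' n : ℕ, ‖a n‖ * ((x + ε) * (y + ε)) ^ n) ≤ (∑' n : ℕ, ‖a n‖ * (x * y) ^ n) + δ := by
  set u : ℝ := x * y with hu
  have hu0 : 0 ≤ u := mul_nonneg hx hy
  set t0 : ℝ := (u + R) / 2 with ht0
  have hut0 : u < t0 := by rw [ht0]; linarith
  have ht0R : t0 < R := by rw [ht0]; linarith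
  have ht00 : 0 ≤ t0 := le_trans hu0 hut0.le
  set c : ℝ → ℝ := fun t => min (max t 0) t0 with hc
  have hc_mem : ∀ t, 0 ≤ c t ∧ c t ≤ t0 := fun t =>
    ⟨le_min (le_max_right t 0) ht00, min_le_right _ _⟩
  have hc_eq : ∀ t, 0 ≤ t → t ≤ t0 → c t = t := fun t h1 h2 => by
    rw [hc]; simp [max_eq_left h1, min_eq_left h2]
  set g : ℝ → ℝ := fun t => ∑' n : ℕ, ‖a n‖ * c t ^ n with hg
  have hcont : Continuous g := by
    apply continuous_tsum (f := fun (n : ℕ) (t : ℝ) => ‖a n‖ * c t ^ n)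
      (u := fun n => ‖a n‖ * t0 ^ n)
    · intro n
      exact (continuous_const.mul (((continuous_id.max continuous_const).min
        continuous_const).pow n))
    · exact summable_coeff hconv ht00 ht0R
    · intro n t
      rw [Real.norm_eq_abs, abs_mul, abs_of_nonneg (norm_nonneg _), abs_of_nonneg
        (pow_nonneg (hc_mem t).1 n)]
      exact mul_le_mul_of_nonneg_left
        (pow_le_pow_left₀ (hc_mem t).1 (hc_mem t).2 n) (norm_nonneg _)
  have hgu : g u = ∑' n : ℕ, ‖a n‖ * u ^ n := by
    rw [hg]; simp only [hc_eq u hu0 hut0.le]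
  have hcu : ContinuousAt g u := hcont.continuousAt
  rw [Metric.continuousAt_iff] at hcu
  obtain ⟨η, hη, hball⟩ := hcu δ hδ
  set d : ℝ := min η (t0 - u) with hd
  have hd0 : 0 < d := lt_min hη (by linarith)
  set ε : ℝ := min 1 (d / (2 * (x + y + 1))) with hε
  have hxy1 : (0:ℝ) < x + y + 1 := by linarith
  have hε0 : 0 < ε := lt_min one_pos (by positivity)
  have hε1 : ε ≤ 1 := min_le_left _ _
  have hεd : ε * (x + y + 1) ≤ d / 2 := by
    have h1 : ε ≤ d / (2 * (x + y + 1)) := min_le_right _ _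
    calc ε * (x + y + 1) ≤ d / (2 * (x + y + 1)) * (x + y + 1) :=
          mul_le_mul_of_nonneg_right h1 (by linarith)
      _ = d / 2 := by field_simp
  have hkey : (x + ε) * (y + ε) - u < d := by
    have : (x + ε) * (y + ε) - u = ε * (x + y + ε) := by rw [hu]; ring
    rw [this]
    calc ε * (x + y + ε) ≤ ε * (x + y + 1) := by nlinarith
      _ ≤ d / 2 := hεd
      _ < d := by linarith
  have hs0 : u ≤ (x + ε) * (y + ε) := by nlinarith
  set s : ℝ := (x + ε) * (y + ε) with hs
  have hst0 : s < t0 := by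
    have : d ≤ t0 - u := min_le_right _ _
    linarith
  refine ⟨ε, hε0, lt_trans hst0 ht0R, ?_⟩
  have hsd : dist s u < η := by
    rw [Real.dist_eq, abs_of_nonneg (by linarith)]
    have : d ≤ η := min_le_left _ _
    linarith
  have := hball hsd
  rw [Real.dist_eq] at this
  have hgs : g s = ∑' n : ℕ, ‖a n‖ * s ^ n := by
    rw [hg]; simp only [hc_eq s (by linarith) hst0.le]
  have habs : |g s - g u| < δ := this
  rw [hgs, hgu] at habs
  have := abs_lt.mp habs
  linarith [this.2]

lemma young_exp {p q : ℝ} (hpq : Real.HolderConjugate p q) (u v : ℝ) :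
    Real.exp (u / p + v / q) ≤ Real.exp u / p + Real.exp v / q := by
  have h := Real.young_inequality_of_nonneg (Real.exp_nonneg (u / p))
    (Real.exp_nonneg (v / q)) hpq
  have h1 : Real.exp (u / p) * Real.exp (v / q) = Real.exp (u / p + v / q) :=
    (Real.exp_add _ _).symm
  have h2 : Real.exp (u / p) ^ p = Real.exp u := by
    rw [← Real.exp_mul, div_mul_cancel₀ _ hpq.ne_zero]
  have h3 : Real.exp (v / q) ^ q = Real.exp v := by
    rw [← Real.exp_mul, div_mul_cancel₀ _ hpq.symm.ne_zero]
  rwa [h1, h2, h3] at h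

lemma bracket {x y p q : ℝ} (hx : 0 ≤ x) (hy : 0 ≤ y)
    (hpq : Real.HolderConjugate p q) (n m : ℕ) :
    (x * y) ^ n * (x ^ (p - 1) * y ^ (q - 1)) ^ m
      + (x * y) ^ m * (x ^ (p - 1) * y ^ (q - 1)) ^ n
      ≤ (x ^ p) ^ n * (y ^ q) ^ m + (x ^ p) ^ m * (y ^ q) ^ n := by
  have hp0 : p ≠ 0 := hpq.ne_zero
  have hq0 : q ≠ 0 := hpq.symm.ne_zero
  have hp1 : p - 1 ≠ 0 := hpq.sub_one_ne_zero
  have hq1 : q - 1 ≠ 0 := hpq.symm.sub_one_ne_zero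
  rcases eq_or_lt_of_le hx with hx0 | hx0
  · have hterm : ∀ k l : ℕ, (x * y) ^ k * (x ^ (p - 1) * y ^ (q - 1)) ^ l
        ≤ (x ^ p) ^ k * (y ^ q) ^ l := by
      intro k l
      rw [← hx0, Real.zero_rpow hp1, Real.zero_rpow hp0, zero_mul, zero_mul]
      rcases Nat.eq_zero_or_pos k with hk | hk
      · subst hk
        simp only [pow_zero, one_mul]
        rcases Nat.eq_zero_or_pos l with hl | hl
        · subst hl; simp
        · rw [zero_pow hl.ne']
          positivity
      · rw [zero_pow hk.ne', zero_mul, zero_mul]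
    exact add_le_add (hterm n m) (hterm m n)
  rcases eq_or_lt_of_le hy with hy0 | hy0
  · have hterm : ∀ k l : ℕ, (x * y) ^ k * (x ^ (p - 1) * y ^ (q - 1)) ^ l
        ≤ (x ^ p) ^ k * (y ^ q) ^ l := by
      intro k l
      rw [← hy0, Real.zero_rpow hq1, Real.zero_rpow hq0, mul_zero, mul_zero]
      rcases Nat.eq_zero_or_pos l with hl | hl
      · subst hl
        simp only [pow_zero, mul_one]
        rcases Nat.eq_zero_or_pos k with hk | hk
        · subst hk; simp
        · rw [zero_pow hk.ne']
          positivity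
      · rw [zero_pow hl.ne', mul_zero, mul_zero]
    exact add_le_add (hterm n m) (hterm m n)
  set X : ℝ := Real.log x with hX
  set Y : ℝ := Real.log y with hY
  have ex : ∀ e : ℝ, x ^ e = Real.exp (e * X) := fun e => by
    rw [Real.rpow_def_of_pos hx0, mul_comm]
  have ey : ∀ e : ℝ, y ^ e = Real.exp (e * Y) := fun e => by
    rw [Real.rpow_def_of_pos hy0, mul_comm]
  have exn : x = Real.exp X := (Real.exp_log hx0).symm
  have eyn : y = Real.exp Y := (Real.exp_log hy0).symm
  set b1 : ℝ := n * p * X + m * q * Y with hb1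
  set b2 : ℝ := m * p * X + n * q * Y with hb2
  have hA : (x ^ p) ^ n * (y ^ q) ^ m = Real.exp b1 := by
    rw [ex p, ey q, ← Real.exp_nat_mul, ← Real.exp_nat_mul, ← Real.exp_add, hb1]
    ring_nf
  have hB : (x ^ p) ^ m * (y ^ q) ^ n = Real.exp b2 := by
    rw [ex p, ey q, ← Real.exp_nat_mul, ← Real.exp_nat_mul, ← Real.exp_add, hb2]
    ring_nf
  have hmul : p * q = p + q := hpq.mul_eq_add
  have hL1 : (x * y) ^ n * (x ^ (p - 1) * y ^ (q - 1)) ^ m =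
      Real.exp (b1 / p + b2 / q) := by
    rw [ex (p-1), ey (q-1), exn, eyn, ← Real.exp_add, ← Real.exp_add, ← Real.exp_nat_mul,
      ← Real.exp_nat_mul, ← Real.exp_add]
    congr 1
    rw [hb1, hb2]
    field_simp
    linear_combination (X * (m:ℝ) * p + Y * (m:ℝ) * q) * hmul
  have hL2 : (x * y) ^ m * (x ^ (p - 1) * y ^ (q - 1)) ^ n =
      Real.exp (b1 / q + b2 / p) := by
    rw [ex (p-1), ey (q-1), exn, eyn, ← Real.exp_add, ← Real.exp_add, ← Real.exp_nat_mul,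
      ← Real.exp_nat_mul, ← Real.exp_add]
    congr 1
    rw [hb1, hb2]
    field_simp
    linear_combination (X * (n:ℝ) * p + Y * (n:ℝ) * q) * hmul
  rw [hL1, hL2, hA, hB]
  have y1 := young_exp hpq b1 b2
  have y2 := young_exp hpq.symm b1 b2
  have hdiv : ∀ t : ℝ, t / p + t / q = t := by
    intro t
    rw [div_add_div _ _ hp0 hq0, div_eq_iff (mul_ne_zero hp0 hq0)]
    linear_combination (-t) * hmul
  calc Real.exp (b1 / p + b2 / q) + Real.exp (b1 / q + b2 / p)
      ≤ (Real.exp b1 / p + Real.exp b2 / q) + (Real.exp b1 / q + Real.exp b2 / p) := by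
        have := young_exp hpq.symm b1 b2
        rw [add_comm (b1/q) (b2/p)] at *
        exact add_le_add y1 (by
          have := young_exp hpq b2 b1
          calc Real.exp (b2 / p + b1 / q) ≤ Real.exp b2 / p + Real.exp b1 / q := this
            _ = Real.exp b1 / q + Real.exp b2 / p := by ring)
    _ = Real.exp b1 + Real.exp b2 := by
        rw [show (Real.exp b1 / p + Real.exp b2 / q) + (Real.exp b1 / q + Real.exp b2 / p)
          = (Real.exp b1 / p + Real.exp b1 / q) + (Real.exp b2 / p + Real.exp b2 / q) by ring,
          hdiv, hdiv]

set_option maxHeartbeats 1000000 in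
lemma tsum_mul_tsum_le_tsum_mul_tsum {c : ℕ → ℝ} (hc : ∀ n, 0 ≤ c n)
    {u w v₁ v₂ : ℝ}
    (hL : Summable fun n : ℕ => c n * u ^ n)
    (hW : Summable fun n : ℕ => c n * w ^ n)
    (hP : Summable fun n : ℕ => c n * v₁ ^ n)
    (hQ : Summable fun n : ℕ => c n * v₂ ^ n)
    (hpt : ∀ n m : ℕ, u ^ n * w ^ m + u ^ m * w ^ n ≤ v₁ ^ n * v₂ ^ m + v₁ ^ m * v₂ ^ n)
    (hu : 0 ≤ u) (hw : 0 ≤ w) (hv₁ : 0 ≤ v₁) (hv₂ : 0 ≤ v₂) :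
    (∑' n : ℕ, c n * u ^ n) * (∑' n : ℕ, c n * w ^ n) ≤
      (∑' n : ℕ, c n * v₁ ^ n) * (∑' n : ℕ, c n * v₂ ^ n) := by
  have hFsum : Summable (fun z : ℕ × ℕ => (c z.1 * u ^ z.1) * (c z.2 * w ^ z.2)) :=
    hL.mul_of_nonneg hW (fun n => mul_nonneg (hc n) (pow_nonneg hu n))
      (fun n => mul_nonneg (hc n) (pow_nonneg hw n))
  have hGsum : Summable (fun z : ℕ × ℕ => (c z.1 * v₁ ^ z.1) * (c z.2 * v₂ ^ z.2)) :=
    hP.mul_of_nonneg hQ (fun n => mul_nonneg (hc n) (pow_nonneg hv₁ n))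
      (fun n => mul_nonneg (hc n) (pow_nonneg hv₂ n))
  have hFswap : Summable (fun z : ℕ × ℕ =>
      (c z.2 * u ^ z.2) * (c z.1 * w ^ z.1)) := by
    simpa using hFsum.prod_symm
  have hGswap : Summable (fun z : ℕ × ℕ =>
      (c z.2 * v₁ ^ z.2) * (c z.1 * v₂ ^ z.1)) := by
    simpa using hGsum.prod_symm
  have hFswap_eq : (∑' z : ℕ × ℕ, (c z.2 * u ^ z.2) * (c z.1 * w ^ z.1))
      = ∑' z : ℕ × ℕ, (c z.1 * u ^ z.1) * (c z.2 * w ^ z.2) := by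
    simpa using (Equiv.prodComm ℕ ℕ).tsum_eq
      (fun z : ℕ × ℕ => (c z.1 * u ^ z.1) * (c z.2 * w ^ z.2))
  have hGswap_eq : (∑' z : ℕ × ℕ, (c z.2 * v₁ ^ z.2) * (c z.1 * v₂ ^ z.1))
      = ∑' z : ℕ × ℕ, (c z.1 * v₁ ^ z.1) * (c z.2 * v₂ ^ z.2) := by
    simpa using (Equiv.prodComm ℕ ℕ).tsum_eq
      (fun z : ℕ × ℕ => (c z.1 * v₁ ^ z.1) * (c z.2 * v₂ ^ z.2))
  have hpt' : ∀ z : ℕ × ℕ,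
      (c z.1 * u ^ z.1) * (c z.2 * w ^ z.2) + (c z.2 * u ^ z.2) * (c z.1 * w ^ z.1)
      ≤ (c z.1 * v₁ ^ z.1) * (c z.2 * v₂ ^ z.2)
        + (c z.2 * v₁ ^ z.2) * (c z.1 * v₂ ^ z.1) := by
    rintro ⟨n, m⟩
    simp only []
    have key := mul_le_mul_of_nonneg_left (hpt n m) (mul_nonneg (hc n) (hc m))
    calc (c n * u ^ n) * (c m * w ^ m) + (c m * u ^ m) * (c n * w ^ n)
        = c n * c m * (u ^ n * w ^ m + u ^ m * w ^ n) := by ring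
      _ ≤ c n * c m * (v₁ ^ n * v₂ ^ m + v₁ ^ m * v₂ ^ n) := key
      _ = (c n * v₁ ^ n) * (c m * v₂ ^ m) + (c m * v₁ ^ m) * (c n * v₂ ^ n) := by ring
  have h2 := Summable.tsum_le_tsum hpt' (hFsum.add hFswap) (hGsum.add hGswap)
  rw [Summable.tsum_add hFsum hFswap, Summable.tsum_add hGsum hGswap, hFswap_eq, hGswap_eq] at h2
  have hLW : (∑' n : ℕ, c n * u ^ n) * (∑' n : ℕ, c n * w ^ n)
      = ∑' z : ℕ × ℕ, (c z.1 * u ^ z.1) * (c z.2 * w ^ z.2) :=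
    Summable.tsum_mul_tsum hL hW hFsum
  have hPQ : (∑' n : ℕ, c n * v₁ ^ n) * (∑' n : ℕ, c n * v₂ ^ n)
      = ∑' z : ℕ × ℕ, (c z.1 * v₁ ^ z.1) * (c z.2 * v₂ ^ z.2) :=
    Summable.tsum_mul_tsum hP hQ hGsum
  rw [hLW, hPQ]
  linarith

end DragomirSandor

/-- For commuting `A`, `B` with `‖A‖^p < R`, `‖B‖^q < R` (conjugate exponents
`p, q`), one has
`r(f(AB)) ≤ f_a(r(A)^p) · f_a(r(B)^q) / f_a(r(A)^{p-1} r(B)^{q-1})`. -/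
theorem spectralRadius_powerSeries_mul_le_dragomir_sandor
    {H : Type*} [NormedAddCommGroup H] [InnerProductSpace ℂ H] [CompleteSpace H]
    (a : ℕ → ℂ) (R : ℝ) (hR : 0 < R)
    (hconv : ∀ z : ℂ, ‖z‖ < R → Summable fun n : ℕ => a n * z ^ n)
    (A B : H →L[ℂ] H) (hcomm : A * B = B * A)
    (p q : ℝ) (hp : 1 < p) (hq : 1 < q) (hpq : 1 / p + 1 / q = 1)
    (hA : ‖A‖ ^ p < R) (hB : ‖B‖ ^ q < R)
    (hne : (∑' n : ℕ, ‖a n‖ *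
        ((spectralRadius ℂ A).toReal ^ (p - 1) *
          (spectralRadius ℂ B).toReal ^ (q - 1)) ^ n) ≠ 0) :
    (spectralRadius ℂ (∑' n : ℕ, a n • (A * B) ^ n)).toReal ≤
      (∑' n : ℕ, ‖a n‖ * ((spectralRadius ℂ A).toReal ^ p) ^ n) *
        (∑' n : ℕ, ‖a n‖ * ((spectralRadius ℂ B).toReal ^ q) ^ n) /
          (∑' n : ℕ, ‖a n‖ *
            ((spectralRadius ℂ A).toReal ^ (p - 1) *
              (spectralRadius ℂ B).toReal ^ (q - 1)) ^ n) := by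
  rcases subsingleton_or_nontrivial H with hH | hH
  · -- trivial case: the spectrum is empty and the RHS is nonnegative
    have hspec : spectrum ℂ (∑' n : ℕ, a n • (A * B) ^ n) = ∅ := by
      rw [Set.eq_empty_iff_forall_notMem]
      intro k hk
      rw [spectrum.mem_iff] at hk
      exact hk (isUnit_of_subsingleton _)
    have h0 : spectralRadius ℂ (∑' n : ℕ, a n • (A * B) ^ n) = 0 := by
      rw [spectralRadius, hspec]
      simp
    rw [h0, ENNReal.toReal_zero]
    have t1 : (0:ℝ) ≤ ∑' n : ℕ, ‖a n‖ * ((spectralRadius ℂ A).toReal ^ p) ^ n :=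
      tsum_nonneg fun n => mul_nonneg (norm_nonneg _)
        (pow_nonneg (Real.rpow_nonneg ENNReal.toReal_nonneg _) n)
    have t2 : (0:ℝ) ≤ ∑' n : ℕ, ‖a n‖ * ((spectralRadius ℂ B).toReal ^ q) ^ n :=
      tsum_nonneg fun n => mul_nonneg (norm_nonneg _)
        (pow_nonneg (Real.rpow_nonneg ENNReal.toReal_nonneg _) n)
    have t3 : (0:ℝ) ≤ ∑' n : ℕ, ‖a n‖ *
        ((spectralRadius ℂ A).toReal ^ (p - 1) * (spectralRadius ℂ B).toReal ^ (q - 1)) ^ n :=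
      tsum_nonneg fun n => mul_nonneg (norm_nonneg _)
        (pow_nonneg (mul_nonneg (Real.rpow_nonneg ENNReal.toReal_nonneg _)
          (Real.rpow_nonneg ENNReal.toReal_nonneg _)) n)
    exact div_nonneg (mul_nonneg t1 t2) t3
  · -- main case
    have hpq' : Real.HolderConjugate p q := Real.holderConjugate_iff.mpr ⟨hp, by rw [← one_div, ← one_div]; exact hpq⟩
    have hp0 : p ≠ 0 := hpq'.ne_zero
    have hq0 : q ≠ 0 := hpq'.symm.ne_zero
    have hppos : 0 < p := hpq'.pos
    have hqpos : 0 < q := hpq'.symm.pos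
    set x : ℝ := (spectralRadius ℂ A).toReal with hxdef
    set y : ℝ := (spectralRadius ℂ B).toReal with hydef
    have hx0 : 0 ≤ x := ENNReal.toReal_nonneg
    have hy0 : 0 ≤ y := ENNReal.toReal_nonneg
    have hxA : x ≤ ‖A‖ := by
      have h1 := spectrum.spectralRadius_le_nnnorm (𝕜 := ℂ) A
      have h2 := ENNReal.toReal_mono ENNReal.coe_ne_top h1
      simpa using h2
    have hyB : y ≤ ‖B‖ := by
      have h1 := spectrum.spectralRadius_le_nnnorm (𝕜 := ℂ) B
      have h2 := ENNReal.toReal_mono ENNReal.coe_ne_top h1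
      simpa using h2
    have hReq : R / p + R / q = R := by
      rw [div_add_div _ _ hp0 hq0, div_eq_iff (mul_ne_zero hp0 hq0)]
      linear_combination (-R) * hpq'.mul_eq_add
    -- ‖A‖ * ‖B‖ < R
    have hnAB : ‖A‖ * ‖B‖ < R := by
      have h1 : ‖A‖ * ‖B‖ ≤ ‖A‖ ^ p / p + ‖B‖ ^ q / q :=
        Real.young_inequality_of_nonneg (norm_nonneg A) (norm_nonneg B) hpq'
      have h2 : ‖A‖ ^ p / p + ‖B‖ ^ q / q < R / p + R / q :=
        add_lt_add ((div_lt_div_iff_of_pos_right hppos).mpr hA)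
          ((div_lt_div_iff_of_pos_right hqpos).mpr hB)
      linarith [hReq]
    have hxyR : x * y < R :=
      lt_of_le_of_lt (mul_le_mul hxA hyB hy0 (norm_nonneg A)) hnAB
    have hxpR : x ^ p < R :=
      lt_of_le_of_lt (Real.rpow_le_rpow hx0 hxA hppos.le) hA
    have hyqR : y ^ q < R :=
      lt_of_le_of_lt (Real.rpow_le_rpow hy0 hyB hqpos.le) hB
    have hwR : x ^ (p - 1) * y ^ (q - 1) < R := by
      have h1 : x ^ (p - 1) ≤ ‖A‖ ^ (p - 1) :=
        Real.rpow_le_rpow hx0 hxA (by linarith)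
      have h2 : y ^ (q - 1) ≤ ‖B‖ ^ (q - 1) :=
        Real.rpow_le_rpow hy0 hyB (by linarith)
      have h3 : ‖A‖ ^ (p - 1) * ‖B‖ ^ (q - 1) ≤
          (‖A‖ ^ (p - 1)) ^ q / q + (‖B‖ ^ (q - 1)) ^ p / p :=
        Real.young_inequality_of_nonneg (Real.rpow_nonneg (norm_nonneg A) _)
          (Real.rpow_nonneg (norm_nonneg B) _) hpq'.symm
      have h4 : (‖A‖ ^ (p - 1)) ^ q = ‖A‖ ^ p := by
        rw [← Real.rpow_mul (norm_nonneg A), hpq'.sub_one_mul_conj]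
      have h5 : (‖B‖ ^ (q - 1)) ^ p = ‖B‖ ^ q := by
        rw [← Real.rpow_mul (norm_nonneg B), hpq'.symm.sub_one_mul_conj]
      rw [h4, h5] at h3
      have h6 : ‖A‖ ^ p / q + ‖B‖ ^ q / p < R / q + R / p :=
        add_lt_add ((div_lt_div_iff_of_pos_right hqpos).mpr hA)
          ((div_lt_div_iff_of_pos_right hppos).mpr hB)
      have h7 : x ^ (p - 1) * y ^ (q - 1) ≤ ‖A‖ ^ (p - 1) * ‖B‖ ^ (q - 1) :=
        mul_le_mul h1 h2 (Real.rpow_nonneg hy0 _) (Real.rpow_nonneg (norm_nonneg A) _)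
      linarith [hReq]
    -- summability of the four series
    have SL := DragomirSandor.summable_coeff hconv (mul_nonneg hx0 hy0) hxyR
    have SW := DragomirSandor.summable_coeff hconv
      (mul_nonneg (Real.rpow_nonneg hx0 _) (Real.rpow_nonneg hy0 _)) hwR
    have SP := DragomirSandor.summable_coeff hconv (Real.rpow_nonneg hx0 _) hxpR
    have SQ := DragomirSandor.summable_coeff hconv (Real.rpow_nonneg hy0 _) hyqR
    have hWpos : 0 < ∑' n : ℕ, ‖a n‖ * (x ^ (p - 1) * y ^ (q - 1)) ^ n :=
      lt_of_le_of_ne (tsum_nonneg fun n => mul_nonneg (norm_nonneg _)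
        (pow_nonneg (mul_nonneg (Real.rpow_nonneg hx0 _) (Real.rpow_nonneg hy0 _)) n))
        (Ne.symm hne)
    -- Part A : spectral radius of the series is at most f_a(x * y)
    have hrT : (spectralRadius ℂ (∑' n : ℕ, a n • (A * B) ^ n)).toReal ≤
        ∑' n : ℕ, ‖a n‖ * (x * y) ^ n := by
      refine le_of_forall_pos_le_add fun δ hδ => ?_
      obtain ⟨ε, hε0, hsR, hFle⟩ := DragomirSandor.exists_eps a hconv hx0 hy0 hxyR hδ
      obtain ⟨CA, hCA1, hCA⟩ := DragomirSandor.exists_norm_pow_le A hε0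
      obtain ⟨CB, hCB1, hCB⟩ := DragomirSandor.exists_norm_pow_le B hε0
      have hxε : (0:ℝ) ≤ x + ε := by linarith
      have hyε : (0:ℝ) ≤ y + ε := by linarith
      have hs0 : (0:ℝ) ≤ (x + ε) * (y + ε) := mul_nonneg hxε hyε
      have hCApos : (0:ℝ) < CA := lt_of_lt_of_le one_pos hCA1
      have hCBpos : (0:ℝ) < CB := lt_of_lt_of_le one_pos hCB1
      have hABc : Commute A B := hcomm
      have hM : ∀ n : ℕ, ‖(A * B) ^ n‖ ≤ (CA * CB) * ((x + ε) * (y + ε)) ^ n := by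
        intro n
        rw [hABc.mul_pow]
        calc ‖A ^ n * B ^ n‖ ≤ ‖A ^ n‖ * ‖B ^ n‖ := norm_mul_le _ _
          _ ≤ (CA * (x + ε) ^ n) * (CB * (y + ε) ^ n) :=
              mul_le_mul (hCA n) (hCB n) (norm_nonneg _)
                (mul_nonneg hCApos.le (pow_nonneg hxε n))
          _ = (CA * CB) * ((x + ε) * (y + ε)) ^ n := by rw [mul_pow]; ring
      have hsum_s := DragomirSandor.summable_coeff hconv hs0 hsR
      have hTj := DragomirSandor.norm_pow_tsum_le a (A * B) (CA * CB)
        ((x + ε) * (y + ε)) hs0 hM hsum_s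
      have hrle := DragomirSandor.spectralRadius_toReal_le_of_norm_pow_le
        (∑' n : ℕ, a n • (A * B) ^ n) (CA * CB)
        (∑' n : ℕ, ‖a n‖ * ((x + ε) * (y + ε)) ^ n) (mul_pos hCApos hCBpos)
        (tsum_nonneg fun n => mul_nonneg (norm_nonneg _) (pow_nonneg hs0 n)) hTj
      exact hrle.trans hFle
    -- Part B : Cauchy–Schwarz-type inequality
    have hCS := DragomirSandor.tsum_mul_tsum_le_tsum_mul_tsum
      (c := fun n => ‖a n‖) (fun n => norm_nonneg _) SL SW SP SQ
      (fun n m => DragomirSandor.bracket hx0 hy0 hpq' n m)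
      (mul_nonneg hx0 hy0)
      (mul_nonneg (Real.rpow_nonneg hx0 _) (Real.rpow_nonneg hy0 _))
      (Real.rpow_nonneg hx0 _) (Real.rpow_nonneg hy0 _)
    rw [le_div_iff₀ hWpos]
    calc (spectralRadius ℂ (∑' n : ℕ, a n • (A * B) ^ n)).toReal *
          (∑' n : ℕ, ‖a n‖ * (x ^ (p - 1) * y ^ (q - 1)) ^ n)
        ≤ (∑' n : ℕ, ‖a n‖ * (x * y) ^ n) *
          (∑' n : ℕ, ‖a n‖ * (x ^ (p - 1) * y ^ (q - 1)) ^ n) :=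
          mul_le_mul_of_nonneg_right hrT hWpos.le
      _ ≤ (∑' n : ℕ, ‖a n‖ * (x ^ p) ^ n) * (∑' n : ℕ, ‖a n‖ * (y ^ q) ^ n) := hCS
end

section
/- Let f(z) = ∑_{n=0}^∞ a_n z^n be a power series with complex coefficients convergent on the open disk D(0,R) ⊂ ℂ with R > 0, and let f_a(z) := ∑_{n=0}^∞ |a_n| z^n. Let A, B be commuting bounded linear operators on a complex Hilbert space H. If ‖A‖² < R and ‖B‖² < R, then r(f(AB))² ≤ f_a(r(A)²) · f_a(r(B)²). -/
open Filter Topology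
open scoped ENNReal NNReal


lemma aux_summable_abs_pow (a : ℕ → ℂ) (R : ℝ) (hR : 0 < R)
    (hconv : ∀ z : ℂ, ‖z‖ < R → Summable fun n : ℕ => a n * z ^ n)
    {r : ℝ} (hr0 : 0 ≤ r) (hrR : r < R) :
    Summable fun n : ℕ => ‖a n‖ * r ^ n := by
  set t : ℝ := (r + R) / 2 with ht
  have ht0 : 0 < t := by positivity
  have hrt : r < t := by simp only [ht]; linarith
  have htR : t < R := by simp only [ht]; linarith
  have hs : Summable fun n : ℕ => a n * (t : ℂ) ^ n := by
    apply hconv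
    simpa [Complex.norm_real, abs_of_pos ht0] using htR
  have h0 : Tendsto (fun n : ℕ => a n * (t : ℂ) ^ n) atTop (𝓝 0) := hs.tendsto_atTop_zero
  have h0' : Tendsto (fun n : ℕ => ‖a n * (t : ℂ) ^ n‖) atTop (𝓝 0) := by
    simpa using h0.norm
  have hev : ∀ᶠ n : ℕ in atTop, ‖a n * (t : ℂ) ^ n‖ ≤ 1 :=
    h0'.eventually (ge_mem_nhds (by norm_num : (0:ℝ) < 1))
  refine Summable.of_norm_bounded_eventually_nat (g := fun n => (r / t) ^ n)
    (summable_geometric_of_lt_one (by positivity) ((div_lt_one ht0).mpr hrt)) ?_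
  filter_upwards [hev] with n hn
  have hre : r = t * (r / t) := by field_simp
  have : ‖a n‖ * r ^ n = ‖a n * (t : ℂ) ^ n‖ * (r / t) ^ n := by
    rw [norm_mul, norm_pow, Complex.norm_real, Real.norm_eq_abs, abs_of_pos ht0,
      mul_assoc, ← mul_pow, ← hre]
  rw [Real.norm_eq_abs, abs_of_nonneg (by positivity)]
  rw [this]
  calc ‖a n * (t : ℂ) ^ n‖ * (r / t) ^ n ≤ 1 * (r / t) ^ n := by
        apply mul_le_mul_of_nonneg_right hn (by positivity)
    _ = (r / t) ^ n := one_mul _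

lemma aux_tsum_cauchy_schwarz (c x y : ℕ → ℝ) (hc : ∀ n, 0 ≤ c n) (hx : ∀ n, 0 ≤ x n)
    (hy : ∀ n, 0 ≤ y n) (hx2 : Summable fun n => c n * x n ^ 2)
    (hy2 : Summable fun n => c n * y n ^ 2) :
    ∑' n, c n * (x n * y n) ≤
      Real.sqrt ((∑' n, c n * x n ^ 2) * (∑' n, c n * y n ^ 2)) := by
  have hsum : Summable fun n => c n * (x n * y n) := by
    refine Summable.of_nonneg_of_le ?_ ?_ (((hx2.add hy2).div_const 2))
    · intro n
      have h1 := hc n; have h2 := hx n; have h3 := hy n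
      positivity
    · intro n
      have h2 : 2 * x n * y n ≤ x n ^ 2 + y n ^ 2 := two_mul_le_add_sq _ _
      have h1 := hc n
      nlinarith
  refine Summable.tsum_le_of_sum_le hsum fun s => ?_
  have hfin : (∑ n ∈ s, c n * (x n * y n)) ^ 2 ≤
      (∑ n ∈ s, c n * x n ^ 2) * ∑ n ∈ s, c n * y n ^ 2 := by
    have := Finset.sum_mul_sq_le_sq_mul_sq s (fun n => Real.sqrt (c n) * x n)
      (fun n => Real.sqrt (c n) * y n)
    calc (∑ n ∈ s, c n * (x n * y n)) ^ 2
        = (∑ n ∈ s, (Real.sqrt (c n) * x n) * (Real.sqrt (c n) * y n)) ^ 2 := by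
          congr 1; apply Finset.sum_congr rfl; intro n _
          rw [mul_mul_mul_comm, Real.mul_self_sqrt (hc n)]
      _ ≤ (∑ n ∈ s, (Real.sqrt (c n) * x n) ^ 2) * ∑ n ∈ s, (Real.sqrt (c n) * y n) ^ 2 := this
      _ = (∑ n ∈ s, c n * x n ^ 2) * ∑ n ∈ s, c n * y n ^ 2 := by
          congr 1 <;> refine Finset.sum_congr rfl fun n _ => by
            rw [mul_pow, Real.sq_sqrt (hc n)]
  have hs0 : 0 ≤ ∑ n ∈ s, c n * (x n * y n) :=
    Finset.sum_nonneg fun n _ => by have := hc n; have := hx n; have := hy n; positivity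
  calc ∑ n ∈ s, c n * (x n * y n) = Real.sqrt ((∑ n ∈ s, c n * (x n * y n)) ^ 2) :=
        (Real.sqrt_sq hs0).symm
    _ ≤ Real.sqrt ((∑' n, c n * x n ^ 2) * (∑' n, c n * y n ^ 2)) := by
        apply Real.sqrt_le_sqrt
        refine hfin.trans (mul_le_mul ?_ ?_ ?_ ?_)
        · exact Summable.sum_le_tsum s (fun n _ => by have := hc n; have := hx n; positivity) hx2
        · exact Summable.sum_le_tsum s (fun n _ => by have := hc n; have := hy n; positivity) hy2
        · exact Finset.sum_nonneg fun n _ => by have := hc n; have := hy n; positivity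
        · exact tsum_nonneg fun n => by have := hc n; have := hx n; positivity


set_option maxHeartbeats 1600000 in
set_option synthInstance.maxHeartbeats 800000 in
/-- For commuting `A`, `B` with `‖A‖² < R`, `‖B‖² < R`, one has
`r(f(AB))² ≤ f_a(r(A)²) · f_a(r(B)²)`. -/
theorem sq_spectralRadius_powerSeries_mul_le
    {H : Type*} [NormedAddCommGroup H] [InnerProductSpace ℂ H] [CompleteSpace H]
    (a : ℕ → ℂ) (R : ℝ) (hR : 0 < R)
    (hconv : ∀ z : ℂ, ‖z‖ < R → Summable fun n : ℕ => a n * z ^ n)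
    (A B : H →L[ℂ] H) (hcomm : A * B = B * A)
    (hA : ‖A‖ ^ 2 < R) (hB : ‖B‖ ^ 2 < R) :
    (spectralRadius ℂ (∑' n : ℕ, a n • (A * B) ^ n)).toReal ^ 2 ≤
      (∑' n : ℕ, ‖a n‖ * ((spectralRadius ℂ A).toReal ^ 2) ^ n) *
        (∑' n : ℕ, ‖a n‖ * ((spectralRadius ℂ B).toReal ^ 2) ^ n) := by
  classical
  have hRHS0 : 0 ≤ (∑' n : ℕ, ‖a n‖ * ((spectralRadius ℂ A).toReal ^ 2) ^ n) *
      (∑' n : ℕ, ‖a n‖ * ((spectralRadius ℂ B).toReal ^ 2) ^ n) := by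
    apply mul_nonneg <;> exact tsum_nonneg fun n => by positivity
  rcases subsingleton_or_nontrivial H with hH | hH
  · haveI : Subsingleton (H →L[ℂ] H) := by
      constructor; intro f g; ext x; exact Subsingleton.elim _ _
    have hspec : spectrum ℂ (∑' n : ℕ, a n • (A * B) ^ n) = ∅ := by
      ext z
      simp only [spectrum.mem_iff, Set.mem_empty_iff_false, iff_false, not_not]
      exact isUnit_of_subsingleton _
    rw [spectralRadius, hspec]
    simp only [Set.mem_empty_iff_false, not_false_eq_true, iSup_neg, iSup_bot,
      ENNReal.bot_eq_zero, ENNReal.toReal_zero, ne_eq, OfNat.ofNat_ne_zero,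
      not_false_eq_true, zero_pow, ciSup_const]
    simpa using hRHS0
  · -- Nontrivial case
    set S₀ : Subalgebra ℂ (H →L[ℂ] H) := Algebra.adjoin ℂ ({A, B} : Set (H →L[ℂ] H)) with hS₀
    have hcomm' : ∀ x ∈ ({A, B} : Set (H →L[ℂ] H)), ∀ y ∈ ({A, B} : Set (H →L[ℂ] H)),
        x * y = y * x := by
      rintro x (rfl | rfl) y (rfl | rfl) <;> first | rfl | exact hcomm | exact hcomm.symm
    letI : CommRing S₀ := Algebra.adjoinCommRingOfComm ℂ hcomm'
    set S : Subalgebra ℂ (H →L[ℂ] H) := S₀.topologicalClosure with hS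
    letI : CommRing S := S₀.commRingTopologicalClosure fun x y => mul_comm x y
    letI : NormedCommRing S := { (inferInstance : NormedRing S) with mul_comm := mul_comm }
    haveI : CompleteSpace S := (Subalgebra.isClosed_topologicalClosure S₀).completeSpace_coe
    haveI : NormOneClass S := ⟨by
      show ‖((1 : S) : H →L[ℂ] H)‖ = 1
      rw [OneMemClass.coe_one, norm_one]⟩
    have hAS : A ∈ S := S₀.le_topologicalClosure (Algebra.subset_adjoin (by simp))
    have hBS : B ∈ S := S₀.le_topologicalClosure (Algebra.subset_adjoin (by simp))
    set A' : S := ⟨A, hAS⟩ with hA'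
    set B' : S := ⟨B, hBS⟩ with hB'
    -- spectral radius in S equals spectral radius in B(H) (Gelfand's formula)
    have hnnA : ∀ n : ℕ, ‖A' ^ n‖₊ = ‖A ^ n‖₊ := by
      intro n
      show ‖((A' ^ n : S) : H →L[ℂ] H)‖₊ = ‖A ^ n‖₊
      norm_cast
    have hgelA : spectralRadius ℂ A' = spectralRadius ℂ A := by
      refine tendsto_nhds_unique
        (spectrum.pow_nnnorm_pow_one_div_tendsto_nhds_spectralRadius A') ?_
      have := spectrum.pow_nnnorm_pow_one_div_tendsto_nhds_spectralRadius A
      simpa only [hnnA] using this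
    have hnnB : ∀ n : ℕ, ‖B' ^ n‖₊ = ‖B ^ n‖₊ := by
      intro n
      show ‖((B' ^ n : S) : H →L[ℂ] H)‖₊ = ‖B ^ n‖₊
      norm_cast
    have hgelB : spectralRadius ℂ B' = spectralRadius ℂ B := by
      refine tendsto_nhds_unique
        (spectrum.pow_nnnorm_pow_one_div_tendsto_nhds_spectralRadius B') ?_
      have := spectrum.pow_nnnorm_pow_one_div_tendsto_nhds_spectralRadius B
      simpa only [hnnB] using this
    set rA : ℝ := (spectralRadius ℂ A).toReal with hrA
    set rB : ℝ := (spectralRadius ℂ B).toReal with hrB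
    have hA_fin : spectralRadius ℂ A ≤ (‖A‖₊ : ℝ≥0∞) := spectrum.spectralRadius_le_nnnorm A
    have hB_fin : spectralRadius ℂ B ≤ (‖B‖₊ : ℝ≥0∞) := spectrum.spectralRadius_le_nnnorm B
    have hrA_le : rA ≤ ‖A‖ := by
      have := ENNReal.toReal_mono ENNReal.coe_ne_top hA_fin
      simpa using this
    have hrB_le : rB ≤ ‖B‖ := by
      have := ENNReal.toReal_mono ENNReal.coe_ne_top hB_fin
      simpa using this
    have hrA0 : 0 ≤ rA := ENNReal.toReal_nonneg
    have hrB0 : 0 ≤ rB := ENNReal.toReal_nonneg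
    -- summability of the series in S
    have hABR : ‖A * B‖ < R := by
      have h1 : ‖A * B‖ ≤ ‖A‖ * ‖B‖ := norm_mul_le A B
      have h2 : 2 * ‖A‖ * ‖B‖ ≤ ‖A‖ ^ 2 + ‖B‖ ^ 2 := two_mul_le_add_sq _ _
      nlinarith
    have hsS : Summable fun n : ℕ => a n • (A' * B') ^ n := by
      refine Summable.of_norm_bounded
        (aux_summable_abs_pow a R hR hconv (norm_nonneg (A * B)) hABR) fun n => ?_
      rw [norm_smul]
      refine mul_le_mul_of_nonneg_left ?_ (norm_nonneg _)
      have hco : ‖(A' * B') ^ n‖ = ‖(A * B) ^ n‖ := by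
        show ‖(((A' * B') ^ n : S) : H →L[ℂ] H)‖ = _
        norm_cast
      rw [hco]
      exact norm_pow_le (A * B) n
    set x : S := ∑' n : ℕ, a n • (A' * B') ^ n with hxdef
    have hx : ((x : S) : H →L[ℂ] H) = ∑' n : ℕ, a n • (A * B) ^ n := by
      have hmap : HasSum (fun n : ℕ => (S.val (a n • (A' * B') ^ n)))
          (S.val x) := hsS.hasSum.map (S.val)
            (show Continuous (Subtype.val : S → H →L[ℂ] H) from continuous_subtype_val)
      have heq : (fun n : ℕ => (S.val (a n • (A' * B') ^ n)))
          = fun n : ℕ => a n • (A * B) ^ n := by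
        funext n
        rw [map_smul, map_pow, map_mul]
        rfl
      rw [heq] at hmap
      exact hmap.tsum_eq.symm
    rw [← hx]
    -- main spectral bound
    set P : ℝ := ∑' n : ℕ, ‖a n‖ * (rA ^ 2) ^ n with hP
    set Q : ℝ := ∑' n : ℕ, ‖a n‖ * (rB ^ 2) ^ n with hQ
    have hPQ0 : 0 ≤ P * Q := hRHS0
    have hPsum : Summable fun n : ℕ => ‖a n‖ * (rA ^ 2) ^ n :=
      aux_summable_abs_pow a R hR hconv (by positivity) (by nlinarith)
    have hQsum : Summable fun n : ℕ => ‖a n‖ * (rB ^ 2) ^ n :=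
      aux_summable_abs_pow a R hR hconv (by positivity) (by nlinarith)
    have key : ∀ z ∈ spectrum ℂ ((x : S) : H →L[ℂ] H), ‖z‖ ≤ Real.sqrt (P * Q) := by
      intro z hz
      have hz' : z ∈ spectrum ℂ x := spectrum.subset_subalgebra x hz
      obtain ⟨φ, hφ⟩ := WeakDual.CharacterSpace.mem_spectrum_iff_exists.mp hz'
      set u : ℝ := ‖φ A'‖ with hu
      set v : ℝ := ‖φ B'‖ with hv
      have hu_le : u ≤ rA := by
        have hmem : φ A' ∈ spectrum ℂ A' := AlgHom.apply_mem_spectrum φ A'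
        have h1 : (‖φ A'‖₊ : ℝ≥0∞) ≤ spectralRadius ℂ A' :=
          le_iSup₂ (f := fun k (_ : k ∈ spectrum ℂ A') => (‖k‖₊ : ℝ≥0∞)) (φ A') hmem
        rw [hgelA] at h1
        have := ENNReal.toReal_mono (hA_fin.trans_lt ENNReal.coe_lt_top).ne h1
        simpa using this
      have hv_le : v ≤ rB := by
        have hmem : φ B' ∈ spectrum ℂ B' := AlgHom.apply_mem_spectrum φ B'
        have h1 : (‖φ B'‖₊ : ℝ≥0∞) ≤ spectralRadius ℂ B' :=
          le_iSup₂ (f := fun k (_ : k ∈ spectrum ℂ B') => (‖k‖₊ : ℝ≥0∞)) (φ B') hmem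
        rw [hgelB] at h1
        have := ENNReal.toReal_mono (hB_fin.trans_lt ENNReal.coe_lt_top).ne h1
        simpa using this
      have hu0 : 0 ≤ u := norm_nonneg _
      have hv0 : 0 ≤ v := norm_nonneg _
      -- z = ∑' a n * (φ A' * φ B')^n
      have hφsum : HasSum (fun n : ℕ => a n * (φ A' * φ B') ^ n) (φ x) := by
        have hmap : HasSum (fun n : ℕ => φ (a n • (A' * B') ^ n)) (φ x) :=
          hsS.hasSum.map φ (map_continuous φ)
        have heq : (fun n : ℕ => φ (a n • (A' * B') ^ n))
            = fun n : ℕ => a n * (φ A' * φ B') ^ n := by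
          funext n
          rw [map_smul, map_pow, map_mul, smul_eq_mul]
        rwa [heq] at hmap
      have huvR : u * v < R := by
        have h1 : u * v ≤ ‖A‖ * ‖B‖ :=
          mul_le_mul (hu_le.trans hrA_le) (hv_le.trans hrB_le) hv0 (norm_nonneg A)
        have h2 : 2 * ‖A‖ * ‖B‖ ≤ ‖A‖ ^ 2 + ‖B‖ ^ 2 := two_mul_le_add_sq _ _
        nlinarith
      have hsn : Summable fun n : ℕ => ‖a n‖ * (u * v) ^ n :=
        aux_summable_abs_pow a R hR hconv (by positivity) huvR
      have hz_eq : z = φ x := hφ.symm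
      have hz_le : ‖z‖ ≤ ∑' n : ℕ, ‖a n‖ * (u * v) ^ n := by
        rw [hz_eq, ← hφsum.tsum_eq]
        refine (norm_tsum_le_tsum_norm ?_).trans_eq ?_
        · refine hsn.congr fun n => ?_
          rw [norm_mul, norm_pow, norm_mul]
        · exact tsum_congr fun n => by rw [norm_mul, norm_pow, norm_mul]
      -- Cauchy–Schwarz
      have hpow2 : ∀ (w : ℝ), (fun n : ℕ => ‖a n‖ * (w ^ n) ^ 2)
          = fun n : ℕ => ‖a n‖ * (w ^ 2) ^ n := by
        intro w; funext n; rw [← pow_mul, ← pow_mul, Nat.mul_comm]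
      have hu2sum : Summable fun n : ℕ => ‖a n‖ * ((u ^ 2) ^ n) :=
        aux_summable_abs_pow a R hR hconv (by positivity) (by nlinarith)
      have hv2sum : Summable fun n : ℕ => ‖a n‖ * ((v ^ 2) ^ n) :=
        aux_summable_abs_pow a R hR hconv (by positivity) (by nlinarith)
      have hcs := aux_tsum_cauchy_schwarz (fun n => ‖a n‖) (fun n => u ^ n) (fun n => v ^ n)
        (fun n => norm_nonneg _) (fun n => by positivity) (fun n => by positivity)
        (by rw [hpow2 u]; exact hu2sum) (by rw [hpow2 v]; exact hv2sum)
      simp only [hpow2 u, hpow2 v, ← mul_pow] at hcs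
      have hmono : Real.sqrt ((∑' n : ℕ, ‖a n‖ * (u ^ 2) ^ n) * ∑' n : ℕ, ‖a n‖ * (v ^ 2) ^ n)
          ≤ Real.sqrt (P * Q) := by
        apply Real.sqrt_le_sqrt
        refine mul_le_mul ?_ ?_ ?_ ?_
        · exact Summable.tsum_le_tsum (fun n => mul_le_mul_of_nonneg_left
            (pow_le_pow_left₀ (by positivity) (by nlinarith) n) (norm_nonneg _)) hu2sum hPsum
        · exact Summable.tsum_le_tsum (fun n => mul_le_mul_of_nonneg_left
            (pow_le_pow_left₀ (by positivity) (by nlinarith) n) (norm_nonneg _)) hv2sum hQsum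
        · exact tsum_nonneg fun n => by positivity
        · exact tsum_nonneg fun n => by positivity
      exact hz_le.trans (hcs.trans hmono)
    -- conclude
    have hsr : spectralRadius ℂ ((x : S) : H →L[ℂ] H) ≤ ENNReal.ofReal (Real.sqrt (P * Q)) := by
      rw [spectralRadius]
      refine iSup₂_le fun z hz => ?_
      rw [← ENNReal.ofReal_coe_nnreal, coe_nnnorm]
      exact ENNReal.ofReal_le_ofReal (key z hz)
    have htr : (spectralRadius ℂ ((x : S) : H →L[ℂ] H)).toReal ≤ Real.sqrt (P * Q) :=
      ENNReal.toReal_le_of_le_ofReal (Real.sqrt_nonneg _) hsr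
    calc (spectralRadius ℂ ((x : S) : H →L[ℂ] H)).toReal ^ 2
        ≤ Real.sqrt (P * Q) ^ 2 := pow_le_pow_left₀ ENNReal.toReal_nonneg htr 2
      _ = P * Q := Real.sq_sqrt hPQ0
end

section
/- Let f(z) = ∑_{n=0}^∞ a_n z^n be a power series with complex coefficients convergent on the open disk D(0,R) ⊂ ℂ with R > 0, and let f_a(z) := ∑_{n=0}^∞ |a_n| z^n. Let A, B be commuting bounded linear operators on a complex Hilbert space H with ‖A‖² < R and ‖B‖² < R. Then r(f(AB)) ≤ (1/2)[f_a(‖AB‖) + f_a(‖A²‖^{1/2} ‖B²‖^{1/2})]. -/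
open Filter Topology
open scoped ENNReal NNReal

/-- Absolute summability strictly inside the disk of convergence. -/
private lemma abs_summable_aux (a : ℕ → ℂ) (R : ℝ)
    (hconv : ∀ z : ℂ, ‖z‖ < R → Summable fun n : ℕ => a n * z ^ n)
    {t : ℝ} (ht0 : 0 ≤ t) (htR : t < R) :
    Summable fun n : ℕ => ‖a n‖ * t ^ n := by
  set u : ℝ := (t + R) / 2 with hu
  have htu : t < u := by rw [hu]; linarith
  have huR : u < R := by rw [hu]; linarith
  have hu0 : 0 < u := lt_of_le_of_lt ht0 htu
  have hsum : Summable fun n : ℕ => a n * (u : ℂ) ^ n := by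
    refine hconv (u : ℂ) ?_
    rw [Complex.norm_real, Real.norm_eq_abs, abs_of_pos hu0]; exact huR
  have h0 : Tendsto (fun n : ℕ => ‖a n * (u : ℂ) ^ n‖) atTop (𝓝 0) := by
    simpa using hsum.tendsto_atTop_zero.norm
  obtain ⟨M, hM⟩ := h0.bddAbove_range
  have hM' : ∀ n : ℕ, ‖a n‖ * u ^ n ≤ M := by
    intro n
    have := hM (Set.mem_range_self n)
    rwa [norm_mul, norm_pow, Complex.norm_real, Real.norm_eq_abs, abs_of_pos hu0] at this
  have hratio : 0 ≤ t / u := div_nonneg ht0 hu0.le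
  have hratio1 : t / u < 1 := (div_lt_one hu0).2 htu
  refine Summable.of_nonneg_of_le (fun n => by positivity) (fun n => ?_)
    ((summable_geometric_of_lt_one hratio hratio1).mul_left M)
  have ht_eq : t ^ n = u ^ n * (t / u) ^ n := by
    rw [← mul_pow, mul_div_cancel₀ _ hu0.ne']
  calc ‖a n‖ * t ^ n = (‖a n‖ * u ^ n) * (t / u) ^ n := by
        rw [ht_eq]; ring
    _ ≤ M * (t / u) ^ n := by
        have : (0 : ℝ) ≤ (t / u) ^ n := by positivity
        exact mul_le_mul_of_nonneg_right (hM' n) this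

/-- Key inductive norm bound on powers of a power series of an operator. -/
private lemma pow_bound_aux {𝒜 : Type*} [NormedRing 𝒜] [NormedAlgebra ℂ 𝒜] [CompleteSpace 𝒜]
    (a : ℕ → ℂ) (T : 𝒜) (t C : ℝ) (hC : 1 ≤ C) (ht : 0 ≤ t)
    (hT : ∀ n : ℕ, ‖T ^ n‖ ≤ C * t ^ n)
    (hs : Summable fun n : ℕ => ‖a n‖ * t ^ n) :
    ∀ (k j : ℕ), ‖T ^ j * (∑' n : ℕ, a n • T ^ n) ^ k‖ ≤
      C * t ^ j * (∑' n : ℕ, ‖a n‖ * t ^ n) ^ k := by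
  set F : ℝ := ∑' n : ℕ, ‖a n‖ * t ^ n with hF
  set S : 𝒜 := ∑' n : ℕ, a n • T ^ n with hSdef
  have hnormterm : ∀ j n : ℕ, ‖a n • T ^ (j + n)‖ ≤ (C * t ^ j) * (‖a n‖ * t ^ n) := by
    intro j n
    rw [norm_smul]
    calc ‖a n‖ * ‖T ^ (j + n)‖ ≤ ‖a n‖ * (C * t ^ (j + n)) :=
          mul_le_mul_of_nonneg_left (hT (j + n)) (norm_nonneg _)
      _ = (C * t ^ j) * (‖a n‖ * t ^ n) := by rw [pow_add]; ring
  have hsummand : ∀ j : ℕ, Summable fun n : ℕ => a n • T ^ (j + n) := fun j =>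
    Summable.of_norm_bounded (hs.mul_left (C * t ^ j)) (hnormterm j)
  have hS0 : Summable fun n : ℕ => a n • T ^ n := by
    simpa using hsummand 0
  intro k
  induction k with
  | zero => intro j; simpa using hT j
  | succ k ih =>
    intro j
    have e1 : T ^ j * S = ∑' n : ℕ, a n • T ^ (j + n) := by
      rw [hSdef, ← hS0.tsum_mul_left (T ^ j)]
      exact tsum_congr fun n => by
        rw [mul_smul_comm, pow_add]
    have e2 : T ^ j * S ^ (k + 1) = ∑' n : ℕ, (a n • T ^ (j + n)) * S ^ k := by
      rw [pow_succ', ← mul_assoc, e1, ← Summable.tsum_mul_right _ (hsummand j)]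
    have hterm : ∀ n : ℕ, ‖(a n • T ^ (j + n)) * S ^ k‖ ≤
        (C * t ^ j * F ^ k) * (‖a n‖ * t ^ n) := by
      intro n
      rw [smul_mul_assoc, norm_smul]
      calc ‖a n‖ * ‖T ^ (j + n) * S ^ k‖ ≤ ‖a n‖ * (C * t ^ (j + n) * F ^ k) :=
            mul_le_mul_of_nonneg_left (ih (j + n)) (norm_nonneg _)
        _ = (C * t ^ j * F ^ k) * (‖a n‖ * t ^ n) := by rw [pow_add]; ring
    have hsm : Summable fun n : ℕ => (C * t ^ j * F ^ k) * (‖a n‖ * t ^ n) :=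
      hs.mul_left _
    have hsn : Summable fun n : ℕ => ‖(a n • T ^ (j + n)) * S ^ k‖ :=
      Summable.of_nonneg_of_le (fun n => norm_nonneg _) hterm hsm
    calc ‖T ^ j * S ^ (k + 1)‖ = ‖∑' n : ℕ, (a n • T ^ (j + n)) * S ^ k‖ := by rw [e2]
      _ ≤ ∑' n : ℕ, ‖(a n • T ^ (j + n)) * S ^ k‖ := norm_tsum_le_tsum_norm hsn
      _ ≤ ∑' n : ℕ, (C * t ^ j * F ^ k) * (‖a n‖ * t ^ n) := Summable.tsum_le_tsum hterm hsn hsm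
      _ = (C * t ^ j * F ^ k) * F := by rw [hs.tsum_mul_left, hF]
      _ = C * t ^ j * F ^ (k + 1) := by ring

/-- If all powers of `x` satisfy `‖x^k‖ ≤ C F^k`, then the spectral radius is at most `F`. -/
private lemma specRad_le_aux {𝒜 : Type*} [NormedRing 𝒜] [NormedAlgebra ℂ 𝒜] [CompleteSpace 𝒜]
    (h1 : ‖(1 : 𝒜)‖ ≤ 1) (x : 𝒜) (C F : ℝ) (hC : 1 ≤ C) (hF : 0 ≤ F)
    (h : ∀ k : ℕ, ‖x ^ k‖ ≤ C * F ^ k) :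
    (spectralRadius ℂ x).toReal ≤ F := by
  have hC0 : (0 : ℝ) < C := lt_of_lt_of_le one_pos hC
  have step : ∀ k : ℕ, (spectralRadius ℂ x).toReal ≤ C ^ ((1 : ℝ) / (k + 1)) * F := by
    intro k
    have he : (0 : ℝ) ≤ 1 / (k + 1) := by positivity
    have hr := spectrum.spectralRadius_le_pow_nnnorm_pow_one_div ℂ x k
    have h1' : ((‖(1 : 𝒜)‖₊ : ℝ≥0∞)) ^ ((1 : ℝ) / (k + 1)) ≤ 1 := by
      refine ENNReal.rpow_le_one ?_ he
      exact_mod_cast (show (‖(1 : 𝒜)‖₊ : ℝ≥0) ≤ 1 from h1)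
    have hr2 : spectralRadius ℂ x ≤ (‖x ^ (k + 1)‖₊ : ℝ≥0∞) ^ ((1 : ℝ) / (k + 1)) := by
      refine hr.trans ?_
      calc (‖x ^ (k + 1)‖₊ : ℝ≥0∞) ^ ((1:ℝ)/(k+1)) * (‖(1 : 𝒜)‖₊ : ℝ≥0∞) ^ ((1:ℝ)/(k+1))
          ≤ (‖x ^ (k + 1)‖₊ : ℝ≥0∞) ^ ((1:ℝ)/(k+1)) * 1 := by
            exact mul_le_mul_right h1' _
        _ = (‖x ^ (k + 1)‖₊ : ℝ≥0∞) ^ ((1:ℝ)/(k+1)) := mul_one _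
    have hne : ((‖x ^ (k + 1)‖₊ : ℝ≥0∞)) ^ ((1 : ℝ) / (k + 1)) ≠ ⊤ :=
      ENNReal.rpow_ne_top_of_nonneg he ENNReal.coe_ne_top
    have := ENNReal.toReal_mono hne hr2
    rw [← ENNReal.toReal_rpow] at this
    have hcoe : ((‖x ^ (k + 1)‖₊ : ℝ≥0∞)).toReal = ‖x ^ (k + 1)‖ := by simp
    rw [hcoe] at this
    refine this.trans ?_
    calc ‖x ^ (k + 1)‖ ^ ((1 : ℝ) / (k + 1)) ≤ (C * F ^ (k + 1)) ^ ((1 : ℝ) / (k + 1)) :=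
          Real.rpow_le_rpow (norm_nonneg _) (h (k + 1)) he
      _ = C ^ ((1 : ℝ) / (k + 1)) * (F ^ (k + 1) : ℝ) ^ ((1 : ℝ) / (k + 1)) :=
          Real.mul_rpow hC0.le (by positivity)
      _ = C ^ ((1 : ℝ) / (k + 1)) * F := by
          rw [← Real.rpow_natCast F (k + 1), ← Real.rpow_mul hF]
          congr 1
          rw [show ((k + 1 : ℕ) : ℝ) * ((1 : ℝ) / (k + 1)) = 1 by
            push_cast; field_simp]
          exact Real.rpow_one F
  have hlim : Tendsto (fun k : ℕ => C ^ ((1 : ℝ) / (k + 1)) * F) atTop (𝓝 F) := by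
    have h1' : Tendsto (fun k : ℕ => (1 : ℝ) / (k + 1)) atTop (𝓝 0) :=
      tendsto_one_div_add_atTop_nhds_zero_nat
    have h2' : Tendsto (fun k : ℕ => C ^ ((1 : ℝ) / (k + 1))) atTop (𝓝 1) := by
      have := (Real.continuousAt_const_rpow (b := (0:ℝ)) hC0.ne').tendsto.comp h1'
      simpa [Real.rpow_zero, Function.comp_def] using this
    simpa using h2'.mul_const F
  exact ge_of_tendsto' hlim step

/-- For commuting `A`, `B` with `‖A‖² < R`, `‖B‖² < R`, one has
`r(f(AB)) ≤ (1/2)[f_a(‖AB‖) + f_a(‖A²‖^{1/2} ‖B²‖^{1/2})]`. -/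
theorem spectralRadius_powerSeries_mul_le_kittaneh
    {H : Type*} [NormedAddCommGroup H] [InnerProductSpace ℂ H] [CompleteSpace H]
    (a : ℕ → ℂ) (R : ℝ) (hR : 0 < R)
    (hconv : ∀ z : ℂ, ‖z‖ < R → Summable fun n : ℕ => a n * z ^ n)
    (A B : H →L[ℂ] H) (hcomm : A * B = B * A)
    (hA : ‖A‖ ^ 2 < R) (hB : ‖B‖ ^ 2 < R) :
    (spectralRadius ℂ (∑' n : ℕ, a n • (A * B) ^ n)).toReal ≤
      (1 / 2) * ((∑' n : ℕ, ‖a n‖ * ‖A * B‖ ^ n) +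
        ∑' n : ℕ, ‖a n‖ * (Real.sqrt ‖A ^ 2‖ * Real.sqrt ‖B ^ 2‖) ^ n) := by
  set T : H →L[ℂ] H := A * B with hTdef
  set s : ℝ := Real.sqrt ‖A ^ 2‖ * Real.sqrt ‖B ^ 2‖ with hsdef
  have hs0 : 0 ≤ s := mul_nonneg (Real.sqrt_nonneg _) (Real.sqrt_nonneg _)
  have h1 : ‖(1 : H →L[ℂ] H)‖ ≤ 1 := by
    rw [ContinuousLinearMap.one_def]; exact ContinuousLinearMap.norm_id_le
  have hpow : ∀ (X : H →L[ℂ] H) (n : ℕ), ‖X ^ n‖ ≤ ‖X‖ ^ n := by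
    intro X n
    cases n with
    | zero => simpa using h1
    | succ n => exact norm_pow_le' X n.succ_pos
  have hAB : ‖A‖ * ‖B‖ < R := by nlinarith [norm_nonneg A, norm_nonneg B]
  have hTR : ‖T‖ < R := lt_of_le_of_lt (norm_mul_le A B) hAB
  have hT0 : 0 ≤ ‖T‖ := norm_nonneg T
  have hsAB : s ≤ ‖A‖ * ‖B‖ := by
    rw [hsdef]
    have hA2 : Real.sqrt ‖A ^ 2‖ ≤ ‖A‖ := by
      rw [show ‖A‖ = Real.sqrt (‖A‖ ^ 2) from (Real.sqrt_sq (norm_nonneg A)).symm]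
      exact Real.sqrt_le_sqrt (hpow A 2)
    have hB2 : Real.sqrt ‖B ^ 2‖ ≤ ‖B‖ := by
      rw [show ‖B‖ = Real.sqrt (‖B‖ ^ 2) from (Real.sqrt_sq (norm_nonneg B)).symm]
      exact Real.sqrt_le_sqrt (hpow B 2)
    exact mul_le_mul hA2 hB2 (Real.sqrt_nonneg _) (norm_nonneg A)
  have hsR : s < R := lt_of_le_of_lt hsAB hAB
  -- key reduction
  have key : ∀ (t C : ℝ), 0 ≤ t → t < R → 1 ≤ C → (∀ n : ℕ, ‖T ^ n‖ ≤ C * t ^ n) →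
      (spectralRadius ℂ (∑' n : ℕ, a n • T ^ n)).toReal ≤ ∑' n : ℕ, ‖a n‖ * t ^ n := by
    intro t C ht0 htR hC hTt
    have hsum := abs_summable_aux a R hconv ht0 htR
    have hb := pow_bound_aux a T t C hC ht0 hTt hsum
    refine specRad_le_aux h1 _ C _ hC (tsum_nonneg fun n => by positivity) ?_
    intro k
    simpa using hb k 0
  -- term 1
  have hterm1 : (spectralRadius ℂ (∑' n : ℕ, a n • T ^ n)).toReal ≤
      ∑' n : ℕ, ‖a n‖ * ‖T‖ ^ n :=
    key ‖T‖ 1 hT0 hTR le_rfl (fun n => by rw [one_mul]; exact hpow T n)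
  -- norm bound for even powers
  have hc : Commute A B := hcomm
  have hs2 : s ^ 2 = ‖A ^ 2‖ * ‖B ^ 2‖ := by
    rw [hsdef, mul_pow, Real.sq_sqrt (norm_nonneg _), Real.sq_sqrt (norm_nonneg _)]
  have heven : ∀ j : ℕ, ‖T ^ (2 * j)‖ ≤ s ^ (2 * j) := by
    intro j
    have hTn : T ^ (2 * j) = (A ^ 2) ^ j * (B ^ 2) ^ j := by
      rw [hTdef, hc.mul_pow, pow_mul A, pow_mul B]
    calc ‖T ^ (2 * j)‖ ≤ ‖(A ^ 2) ^ j‖ * ‖(B ^ 2) ^ j‖ := by rw [hTn]; exact norm_mul_le _ _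
      _ ≤ ‖A ^ 2‖ ^ j * ‖B ^ 2‖ ^ j :=
          mul_le_mul (hpow _ j) (hpow _ j) (norm_nonneg _) (by positivity)
      _ = s ^ (2 * j) := by rw [pow_mul, hs2, mul_pow]
  have hTn : ∀ t : ℝ, s ≤ t → 0 < t → ∀ n : ℕ, ‖T ^ n‖ ≤ max 1 (‖T‖ / t) * t ^ n := by
    intro t hst ht n
    have hmax1 : (1 : ℝ) ≤ max 1 (‖T‖ / t) := le_max_left _ _
    rcases Nat.even_or_odd n with ⟨j, hj⟩ | ⟨j, hj⟩
    · have hn : n = 2 * j := by omega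
      subst hn
      calc ‖T ^ (2 * j)‖ ≤ s ^ (2 * j) := heven j
        _ ≤ t ^ (2 * j) := pow_le_pow_left₀ hs0 hst _
        _ ≤ max 1 (‖T‖ / t) * t ^ (2 * j) :=
            le_mul_of_one_le_left (by positivity) hmax1
    · have hn : n = 2 * j + 1 := by omega
      subst hn
      calc ‖T ^ (2 * j + 1)‖ = ‖T ^ (2 * j) * T‖ := by rw [pow_succ]
        _ ≤ ‖T ^ (2 * j)‖ * ‖T‖ := norm_mul_le _ _
        _ ≤ t ^ (2 * j) * ‖T‖ := by
            refine mul_le_mul_of_nonneg_right ((heven j).trans ?_) hT0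
            exact pow_le_pow_left₀ hs0 hst _
        _ = t ^ (2 * j) * ((‖T‖ / t) * t) := by rw [div_mul_cancel₀ _ ht.ne']
        _ ≤ t ^ (2 * j) * (max 1 (‖T‖ / t) * t) := by
            refine mul_le_mul_of_nonneg_left ?_ (by positivity)
            exact mul_le_mul_of_nonneg_right (le_max_right _ _) ht.le
        _ = max 1 (‖T‖ / t) * t ^ (2 * j + 1) := by ring
  -- term 2
  have hterm2 : (spectralRadius ℂ (∑' n : ℕ, a n • T ^ n)).toReal ≤
      ∑' n : ℕ, ‖a n‖ * s ^ n := by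
    set u : ℝ := (s + R) / 2 with hu
    have hsu : s < u := by rw [hu]; linarith
    have huR : u < R := by rw [hu]; linarith
    have hu0 : 0 < u := lt_of_le_of_lt hs0 hsu
    set tm : ℕ → ℝ := fun m => s + (R - s) / (m + 2) with htm
    have htm_pos : ∀ m : ℕ, 0 < tm m := by
      intro m
      have : (0 : ℝ) < (R - s) / (m + 2) := by
        apply div_pos (by linarith) (by positivity)
      rw [htm]; dsimp only; linarith
    have htm_ge : ∀ m : ℕ, s ≤ tm m := fun m => by
      have := htm_pos m
      have h2 : (0 : ℝ) < (R - s) / (m + 2) := div_pos (by linarith) (by positivity)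
      rw [htm]; dsimp only; linarith
    have htm_le : ∀ m : ℕ, tm m ≤ u := by
      intro m
      rw [htm, hu]; dsimp only
      have h2 : (R - s) / (m + 2 : ℝ) ≤ (R - s) / 2 := by
        apply div_le_div_of_nonneg_left (by linarith) (by norm_num)
        have : (0:ℝ) ≤ (m:ℝ) := Nat.cast_nonneg m
        linarith
      linarith
    have hstep : ∀ m : ℕ, (spectralRadius ℂ (∑' n : ℕ, a n • T ^ n)).toReal ≤
        ∑' n : ℕ, ‖a n‖ * tm m ^ n := by
      intro m
      exact key (tm m) (max 1 (‖T‖ / tm m)) (htm_pos m).le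
        (lt_of_le_of_lt (htm_le m) huR) (le_max_left _ _)
        (hTn (tm m) (htm_ge m) (htm_pos m))
    have hlim : Tendsto (fun m : ℕ => ∑' n : ℕ, ‖a n‖ * tm m ^ n) atTop
        (𝓝 (∑' n : ℕ, ‖a n‖ * s ^ n)) := by
      refine tendsto_tsum_of_dominated_convergence
        (bound := fun n : ℕ => ‖a n‖ * u ^ n)
        (abs_summable_aux a R hconv hu0.le huR) (fun n => ?_) ?_
      · have htm_lim : Tendsto tm atTop (𝓝 s) := by
          rw [htm]
          have h2 : Tendsto (fun m : ℕ => ((m : ℝ) + 2)) atTop atTop :=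
            tendsto_atTop_add_const_right _ 2 tendsto_natCast_atTop_atTop
          have h3 : Tendsto (fun m : ℕ => (R - s) / (m + 2)) atTop (𝓝 0) := by
            simpa [div_eq_mul_inv] using h2.inv_tendsto_atTop.const_mul (R - s)
          simpa using (tendsto_const_nhds (x := s)).add h3
        simpa using ((htm_lim.pow n).const_mul (‖a n‖))
      · refine Filter.Eventually.of_forall fun m => fun n => ?_
        have h1' : 0 ≤ ‖a n‖ * tm m ^ n := mul_nonneg (norm_nonneg _) (pow_nonneg (htm_pos m).le n)
        rw [Real.norm_of_nonneg h1']
        refine mul_le_mul_of_nonneg_left ?_ (norm_nonneg _)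
        exact pow_le_pow_left₀ (htm_pos m).le (htm_le m) n
    exact ge_of_tendsto' hlim hstep
  linarith [hterm1, hterm2]
end

section
/- Let f(z) = ∑_{n=0}^∞ a_n z^n be a power series with complex coefficients convergent on the open disk D(0,R) ⊂ ℂ with R > 0, and let f_a(z) := ∑_{n=0}^∞ |a_n| z^n. Let A, B be commuting bounded linear operators on a complex Hilbert space H with ‖A‖² < R, ‖B‖² < R, ‖A‖ < R and ‖B‖ < R. Then r(f(AB)) ≤ (1/2) f_a(‖AB‖) + (1/2) min{ f_a(‖A‖^{1/2} ‖AB²‖^{1/2}), f_a(‖A²B‖^{1/2} ‖B‖^{1/2}) }. -/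
open Filter
open scoped ENNReal NNReal

section Aux

/-- Absolute summability of a power series strictly inside the disk of convergence. -/
lemma aux_summable (a : ℕ → ℂ) (R : ℝ)
    (hconv : ∀ z : ℂ, ‖z‖ < R → Summable fun n : ℕ => a n * z ^ n)
    {x : ℝ} (hx0 : 0 ≤ x) (hxR : x < R) :
    Summable fun n : ℕ => ‖a n‖ * x ^ n := by
  set y : ℝ := (x + R) / 2 with hy
  have hxy : x < y := by rw [hy]; linarith
  have hy0 : 0 < y := lt_of_le_of_lt hx0 hxy
  have hs : Summable fun n : ℕ => a n * (y : ℂ) ^ n := by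
    apply hconv
    rw [Complex.norm_real, Real.norm_eq_abs, abs_of_nonneg hy0.le, hy]; linarith
  have h0 : Tendsto (fun n : ℕ => ‖a n * (y : ℂ) ^ n‖) atTop (nhds 0) := by
    simpa using (hs.tendsto_atTop_zero.norm)
  obtain ⟨C, hC⟩ := h0.bddAbove_range
  have hCmem : ∀ n : ℕ, ‖a n‖ * y ^ n ≤ C := by
    intro n
    have := hC (Set.mem_range_self n)
    rwa [norm_mul, norm_pow, Complex.norm_real, Real.norm_eq_abs, abs_of_nonneg hy0.le] at this
  have hq0 : 0 ≤ x / y := div_nonneg hx0 hy0.le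
  have hq1 : x / y < 1 := (div_lt_one hy0).2 hxy
  have hgeo : Summable fun n : ℕ => C * (x / y) ^ n :=
    (summable_geometric_of_lt_one hq0 hq1).mul_left C
  refine Summable.of_nonneg_of_le (fun n => by positivity) (fun n => ?_) hgeo
  have hx_eq : x ^ n = y ^ n * (x / y) ^ n := by
    rw [← mul_pow, mul_div_cancel₀ _ (ne_of_gt hy0)]
  calc ‖a n‖ * x ^ n = (‖a n‖ * y ^ n) * (x / y) ^ n := by rw [hx_eq]; ring
    _ ≤ C * (x / y) ^ n := mul_le_mul_of_nonneg_right (hCmem n) (by positivity)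

lemma aux_shift (a : ℕ → ℂ) {x : ℝ} (hx0 : 0 ≤ x)
    (hsum : Summable fun n : ℕ => ‖a n‖ * x ^ n) :
    Summable fun n : ℕ => ‖a (n + 1)‖ * x ^ n := by
  rcases eq_or_lt_of_le hx0 with hx | hx
  · apply summable_of_ne_finset_zero (s := {0})
    intro n hn
    have hn0 : n ≠ 0 := by simpa using hn
    rw [← hx, zero_pow hn0, mul_zero]
  · have h1 : Summable fun n : ℕ => ‖a (n + 1)‖ * x ^ (n + 1) :=
      (summable_nat_add_iff 1).2 hsum
    have h2 := h1.mul_right x⁻¹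
    refine h2.congr fun n => ?_
    rw [pow_succ]
    field_simp

variable {H : Type*} [NormedAddCommGroup H] [NormedSpace ℂ H] [CompleteSpace H]

lemma opnorm_pow_le (X : H →L[ℂ] H) : ∀ m : ℕ, ‖X ^ m‖ ≤ ‖X‖ ^ m := by
  intro m
  induction m with
  | zero =>
    rw [pow_zero, pow_zero, ContinuousLinearMap.one_def]
    exact ContinuousLinearMap.norm_id_le
  | succ m ih =>
    rw [pow_succ, pow_succ]
    exact (norm_mul_le _ _).trans (mul_le_mul_of_nonneg_right ih (norm_nonneg _))

/-- Core estimate: if `‖T^(n+1)‖ ≤ c x^n` for all `n`, then the spectral radius of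
`∑ aₙ Tⁿ` is at most `∑ |aₙ| xⁿ`. -/
lemma core_lemma (a : ℕ → ℂ) (T : H →L[ℂ] H) (x c : ℝ) (hx : 0 ≤ x) (hc : 0 ≤ c)
    (hsum : Summable fun n : ℕ => ‖a n‖ * x ^ n)
    (hT : ∀ n : ℕ, ‖T ^ (n + 1)‖ ≤ c * x ^ n) :
    (spectralRadius ℂ (∑' n : ℕ, a n • T ^ n)).toReal ≤ ∑' n : ℕ, ‖a n‖ * x ^ n := by
  set S : H →L[ℂ] H := ∑' n : ℕ, a n • T ^ n with hS
  set F : ℝ := ∑' n : ℕ, ‖a n‖ * x ^ n with hF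
  have hF0 : 0 ≤ F := tsum_nonneg fun n => by positivity
  have hsumG : Summable fun n : ℕ => ‖a (n + 1)‖ * x ^ n := aux_shift a hx hsum
  set G : ℝ := ∑' n : ℕ, ‖a (n + 1)‖ * x ^ n with hG
  have hG0 : 0 ≤ G := tsum_nonneg fun n => by positivity
  -- summability of the operator series with shifted exponents
  have hsummable_shift : ∀ j : ℕ, Summable fun m : ℕ => a m • T ^ (m + (j + 1)) := by
    intro j
    apply Summable.of_norm
    refine Summable.of_nonneg_of_le (fun m => norm_nonneg _) (fun m => ?_)
      (hsum.mul_left (c * x ^ j))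
    calc ‖a m • T ^ (m + (j + 1))‖ = ‖a m‖ * ‖T ^ (m + (j + 1))‖ :=
      norm_smul (a m) (T ^ (m + (j + 1)))
      _ ≤ ‖a m‖ * (c * x ^ (m + j)) := by
          refine mul_le_mul_of_nonneg_left ?_ (norm_nonneg _)
          have h := hT (m + j)
          have he : m + (j + 1) = m + j + 1 := by omega
          rwa [he]
      _ = c * x ^ j * (‖a m‖ * x ^ m) := by rw [pow_add]; ring
  have hsummable0 : Summable fun m : ℕ => a m • T ^ m := by
    rw [← summable_nat_add_iff 1]
    apply Summable.of_norm
    refine Summable.of_nonneg_of_le (fun m => norm_nonneg _) (fun m => ?_)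
      (hsumG.mul_left c)
    calc ‖a (m + 1) • T ^ (m + 1)‖ = ‖a (m + 1)‖ * ‖T ^ (m + 1)‖ :=
      norm_smul (a (m + 1)) (T ^ (m + 1))
      _ ≤ ‖a (m + 1)‖ * (c * x ^ m) :=
          mul_le_mul_of_nonneg_left (hT m) (norm_nonneg _)
      _ = c * (‖a (m + 1)‖ * x ^ m) := by ring
  -- key estimate by induction on k
  have key : ∀ k n : ℕ, ‖S ^ k * T ^ (n + 1)‖ ≤ c * F ^ k * x ^ n := by
    intro k
    induction k with
    | zero => intro n; simpa using hT n
    | succ k ih =>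
      intro n
      have h1 : S * T ^ (n + 1) = ∑' m : ℕ, a m • T ^ (m + (n + 1)) := by
        rw [hS, ← hsummable0.tsum_mul_right]
        congr 1
        funext m
        rw [smul_mul_assoc, ← pow_add]
      have h2 : S ^ (k + 1) * T ^ (n + 1) = ∑' m : ℕ, a m • (S ^ k * T ^ (m + (n + 1))) := by
        rw [pow_succ, mul_assoc, h1, ← (hsummable_shift n).tsum_mul_left]
        congr 1
        funext m
        rw [mul_smul_comm]
      rw [h2]
      have hgsum : HasSum (fun m : ℕ => (c * F ^ k * x ^ n) * (‖a m‖ * x ^ m))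
          ((c * F ^ k * x ^ n) * F) := hsum.hasSum.mul_left _
      have hbound : ∀ m : ℕ, ‖a m • (S ^ k * T ^ (m + (n + 1)))‖ ≤
          (c * F ^ k * x ^ n) * (‖a m‖ * x ^ m) := by
        intro m
        have h3 : ‖S ^ k * T ^ (m + (n + 1))‖ ≤ c * F ^ k * x ^ (m + n) := by
          have h4 := ih (m + n)
          have he : m + (n + 1) = m + n + 1 := by omega
          rwa [he]
        calc ‖a m • (S ^ k * T ^ (m + (n + 1)))‖
            = ‖a m‖ * ‖S ^ k * T ^ (m + (n + 1))‖ := norm_smul (a m) (S ^ k * T ^ (m + (n + 1)))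
          _ ≤ ‖a m‖ * (c * F ^ k * x ^ (m + n)) :=
              mul_le_mul_of_nonneg_left h3 (norm_nonneg _)
          _ = (c * F ^ k * x ^ n) * (‖a m‖ * x ^ m) := by rw [pow_add]; ring
      calc ‖∑' m : ℕ, a m • (S ^ k * T ^ (m + (n + 1)))‖ ≤ (c * F ^ k * x ^ n) * F :=
            tsum_of_norm_bounded hgsum hbound
        _ = c * F ^ (k + 1) * x ^ n := by rw [pow_succ]; ring
  -- first coefficient bound
  have ha0F : ‖a 0‖ ≤ F := by
    have h := Summable.le_tsum hsum 0 (fun j _ => by positivity)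
    simpa using h
  -- one-step norm bound
  have step : ∀ k : ℕ, ‖S ^ (k + 1)‖ ≤ ‖a 0‖ * ‖S ^ k‖ + c * G * F ^ k := by
    intro k
    have h1 : S ^ (k + 1) = ∑' m : ℕ, a m • (S ^ k * T ^ m) := by
      rw [pow_succ, hS, ← hsummable0.tsum_mul_left]
      congr 1
      funext m
      rw [mul_smul_comm]
    have hsummable2 : Summable fun m : ℕ => a m • (S ^ k * T ^ m) := by
      rw [← summable_nat_add_iff 1]
      apply Summable.of_norm
      refine Summable.of_nonneg_of_le (fun m => norm_nonneg _) (fun m => ?_)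
        (hsumG.mul_left (c * F ^ k))
      calc ‖a (m + 1) • (S ^ k * T ^ (m + 1))‖
          = ‖a (m + 1)‖ * ‖S ^ k * T ^ (m + 1)‖ := norm_smul (a (m + 1)) (S ^ k * T ^ (m + 1))
        _ ≤ ‖a (m + 1)‖ * (c * F ^ k * x ^ m) :=
            mul_le_mul_of_nonneg_left (key k m) (norm_nonneg _)
        _ = c * F ^ k * (‖a (m + 1)‖ * x ^ m) := by ring
    rw [h1, Summable.tsum_eq_zero_add hsummable2]
    have hgsum : HasSum (fun m : ℕ => (c * F ^ k) * (‖a (m + 1)‖ * x ^ m))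
        ((c * F ^ k) * G) := hsumG.hasSum.mul_left _
    have htail : ‖∑' m : ℕ, a (m + 1) • (S ^ k * T ^ (m + 1))‖ ≤ (c * F ^ k) * G := by
      apply tsum_of_norm_bounded hgsum
      intro m
      calc ‖a (m + 1) • (S ^ k * T ^ (m + 1))‖
          = ‖a (m + 1)‖ * ‖S ^ k * T ^ (m + 1)‖ := norm_smul (a (m + 1)) (S ^ k * T ^ (m + 1))
        _ ≤ ‖a (m + 1)‖ * (c * F ^ k * x ^ m) :=
            mul_le_mul_of_nonneg_left (key k m) (norm_nonneg _)
        _ = (c * F ^ k) * (‖a (m + 1)‖ * x ^ m) := by ring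
    calc ‖a 0 • (S ^ k * T ^ 0) + ∑' m : ℕ, a (m + 1) • (S ^ k * T ^ (m + 1))‖
        ≤ ‖a 0 • (S ^ k * T ^ 0)‖ + ‖∑' m : ℕ, a (m + 1) • (S ^ k * T ^ (m + 1))‖ :=
          norm_add_le _ _
      _ ≤ ‖a 0‖ * ‖S ^ k‖ + c * G * F ^ k := by
          apply add_le_add
          · have heq : ‖a 0 • (S ^ k * T ^ 0)‖ = ‖a 0‖ * ‖S ^ k‖ := by
              rw [pow_zero, mul_one]
              exact norm_smul (a 0) (S ^ k)
            exact heq.le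
          · calc ‖∑' m : ℕ, a (m + 1) • (S ^ k * T ^ (m + 1))‖ ≤ (c * F ^ k) * G := htail
              _ = c * G * F ^ k := by ring
  -- global norm bound
  have hS0 : ‖S ^ 0‖ ≤ 1 := by
    rw [pow_zero, ContinuousLinearMap.one_def]
    exact ContinuousLinearMap.norm_id_le
  have hcG : 0 ≤ c * G := mul_nonneg hc hG0
  have bound : ∀ k : ℕ, ‖S ^ (k + 1)‖ ≤ F ^ (k + 1) + ((k : ℝ) + 1) * (c * G) * F ^ k := by
    intro k
    induction k with
    | zero =>
      have h1 := step 0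
      have h2 : ‖a 0‖ * ‖S ^ 0‖ ≤ F := by
        calc ‖a 0‖ * ‖S ^ 0‖ ≤ ‖a 0‖ * 1 := mul_le_mul_of_nonneg_left hS0 (norm_nonneg _)
          _ = ‖a 0‖ := mul_one _
          _ ≤ F := ha0F
      norm_num at h1 h2 ⊢
      linarith
    | succ k ih =>
      have h1 := step (k + 1)
      have h2 : ‖a 0‖ * ‖S ^ (k + 1)‖ ≤ F * (F ^ (k + 1) + ((k : ℝ) + 1) * (c * G) * F ^ k) :=
        mul_le_mul ha0F ih (norm_nonneg _) hF0
      have h3 : F * (F ^ (k + 1) + ((k : ℝ) + 1) * (c * G) * F ^ k) + c * G * F ^ (k + 1)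
          = F ^ (k + 1 + 1) + (((k : ℝ) + 1) + 1) * (c * G) * F ^ (k + 1) := by ring
      calc ‖S ^ (k + 1 + 1)‖ ≤ ‖a 0‖ * ‖S ^ (k + 1)‖ + c * G * F ^ (k + 1) := h1
        _ ≤ F * (F ^ (k + 1) + ((k : ℝ) + 1) * (c * G) * F ^ k) + c * G * F ^ (k + 1) := by
            linarith
        _ = F ^ (k + 1 + 1) + ((((k : ℕ) + 1 : ℕ) : ℝ) + 1) * (c * G) * F ^ (k + 1) := by
            rw [h3]; push_cast; ring
  -- spectral radius power bound
  set ρ : ℝ := (spectralRadius ℂ S).toReal with hρdef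
  have hρ0 : 0 ≤ ρ := ENNReal.toReal_nonneg
  have hρpow : ∀ k : ℕ, ρ ^ (k + 1) ≤ ‖S ^ (k + 1)‖ := by
    intro k
    have h1 := spectrum.spectralRadius_le_pow_nnnorm_pow_one_div ℂ S k
    have hone : (‖(1 : H →L[ℂ] H)‖₊ : ℝ≥0∞) ≤ 1 := by
      rw [← ENNReal.coe_one, ENNReal.coe_le_coe, ← NNReal.coe_le_coe, coe_nnnorm,
        NNReal.coe_one]
      simpa using hS0
    have hexp : (0 : ℝ) ≤ 1 / ((k : ℝ) + 1) := by positivity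
    have h2 : (‖(1 : H →L[ℂ] H)‖₊ : ℝ≥0∞) ^ (1 / ((k : ℝ) + 1) : ℝ) ≤ 1 := by
      apply ENNReal.rpow_le_one hone
      positivity
    have h3 : spectralRadius ℂ S ≤ (‖S ^ (k + 1)‖₊ : ℝ≥0∞) ^ (1 / ((k : ℝ) + 1) : ℝ) := by
      calc spectralRadius ℂ S ≤ (‖S ^ (k + 1)‖₊ : ℝ≥0∞) ^ (1 / ((k : ℝ) + 1) : ℝ) *
            (‖(1 : H →L[ℂ] H)‖₊ : ℝ≥0∞) ^ (1 / ((k : ℝ) + 1) : ℝ) := h1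
        _ ≤ (‖S ^ (k + 1)‖₊ : ℝ≥0∞) ^ (1 / ((k : ℝ) + 1) : ℝ) * 1 := by
            exact mul_le_mul_right h2 _
        _ = (‖S ^ (k + 1)‖₊ : ℝ≥0∞) ^ (1 / ((k : ℝ) + 1) : ℝ) := mul_one _
    have h4 : (spectralRadius ℂ S) ^ (k + 1) ≤ (‖S ^ (k + 1)‖₊ : ℝ≥0∞) := by
      have h5 := pow_le_pow_left' h3 (k + 1)
      have h6 : ((‖S ^ (k + 1)‖₊ : ℝ≥0∞) ^ (1 / ((k : ℝ) + 1) : ℝ)) ^ (k + 1)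
          = (‖S ^ (k + 1)‖₊ : ℝ≥0∞) := by
        rw [← ENNReal.rpow_natCast ((‖S ^ (k + 1)‖₊ : ℝ≥0∞) ^ (1 / ((k : ℝ) + 1) : ℝ)) (k + 1),
          ← ENNReal.rpow_mul]
        have hkne : ((k : ℝ) + 1) ≠ 0 := by positivity
        rw [show (1 / ((k : ℝ) + 1) : ℝ) * ((k + 1 : ℕ) : ℝ) = 1 by
          push_cast
          field_simp]
        exact ENNReal.rpow_one _
      rwa [h6] at h5
    have h7 : ((spectralRadius ℂ S) ^ (k + 1)).toReal ≤ ((‖S ^ (k + 1)‖₊ : ℝ≥0∞)).toReal :=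
      ENNReal.toReal_mono ENNReal.coe_ne_top h4
    rwa [ENNReal.toReal_pow, ENNReal.coe_toReal, coe_nnnorm] at h7
  -- conclude by contradiction
  by_contra hcon
  push_neg at hcon
  rw [← hρdef, ← hF] at *
  rcases eq_or_lt_of_le hF0 with hFz | hFpos
  · have h1 := (hρpow 1).trans (bound 1)
    rw [← hFz] at h1
    norm_num at h1
    nlinarith [hcon, hρ0]
  · set q : ℝ := F / ρ with hq
    have hρpos : 0 < ρ := lt_of_le_of_lt hF0 hcon
    have hq0 : 0 ≤ q := div_nonneg hF0 hρ0
    have hq1 : q < 1 := (div_lt_one hρpos).2 hcon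
    set E : ℝ := c * G with hE
    set u : ℕ → ℝ := fun k => q ^ (k + 1) + (E / F) * (((k : ℝ) + 1) * q ^ (k + 1)) with hu
    have hukey : ∀ k : ℕ, 1 ≤ u k := by
      intro k
      have h1 := (hρpow k).trans (bound k)
      have h2 : u k * ρ ^ (k + 1) = F ^ (k + 1) + ((k : ℝ) + 1) * E * F ^ k := by
        rw [hu]
        simp only
        rw [hq, div_pow]
        have hρk : ρ ^ (k + 1) ≠ 0 := pow_ne_zero _ hρpos.ne'
        have hFne : F ≠ 0 := hFpos.ne'
        field_simp
        ring
      have h3 : (1 : ℝ) * ρ ^ (k + 1) ≤ u k * ρ ^ (k + 1) := by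
        rw [h2, one_mul]
        exact h1
      exact le_of_mul_le_mul_right (by rwa [one_mul] at h3 ⊢) (by positivity)
    have ht1 : Tendsto (fun k : ℕ => q ^ k) atTop (nhds 0) :=
      tendsto_pow_atTop_nhds_zero_of_lt_one hq0 hq1
    have ht2 : Tendsto (fun k : ℕ => (k : ℝ) * q ^ k) atTop (nhds 0) := by
      have hs : Summable (fun k : ℕ => (k : ℝ) ^ 1 * q ^ k) :=
        summable_pow_mul_geometric_of_norm_lt_one 1 (by rwa [Real.norm_eq_abs, abs_of_nonneg hq0])
      have := hs.tendsto_atTop_zero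
      simpa using this
    have ht3 : Tendsto (fun k : ℕ => ((k : ℝ) + 1) * q ^ (k + 1)) atTop (nhds 0) := by
      have h := ht2.comp (tendsto_add_atTop_nat 1)
      exact h.congr fun k => by simp only [Function.comp_apply]; push_cast; ring
    have ht4 : Tendsto (fun k : ℕ => q ^ (k + 1)) atTop (nhds 0) := by
      have h := ht1.comp (tendsto_add_atTop_nat 1)
      exact h.congr fun k => by simp only [Function.comp_apply]
    have htu : Tendsto u atTop (nhds 0) := by
      have := ht4.add (ht3.const_mul (E / F))
      simpa [hu] using this
    have hev := htu.eventually_lt_const one_pos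
    obtain ⟨k, hk⟩ := hev.exists
    exact absurd (hukey k) (not_le.2 hk)

end Aux

/-- For commuting `A`, `B` with `‖A‖², ‖B‖², ‖A‖, ‖B‖ < R`, one has
`r(f(AB)) ≤ (1/2) f_a(‖AB‖)
  + (1/2) min { f_a(‖A‖^{1/2} ‖AB²‖^{1/2}), f_a(‖A²B‖^{1/2} ‖B‖^{1/2}) }`. -/
theorem spectralRadius_powerSeries_mul_le_min
    {H : Type*} [NormedAddCommGroup H] [InnerProductSpace ℂ H] [CompleteSpace H]
    (a : ℕ → ℂ) (R : ℝ) (hR : 0 < R)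
    (hconv : ∀ z : ℂ, ‖z‖ < R → Summable fun n : ℕ => a n * z ^ n)
    (A B : H →L[ℂ] H) (hcomm : A * B = B * A)
    (hA2 : ‖A‖ ^ 2 < R) (hB2 : ‖B‖ ^ 2 < R) (hA : ‖A‖ < R) (hB : ‖B‖ < R) :
    (spectralRadius ℂ (∑' n : ℕ, a n • (A * B) ^ n)).toReal ≤
      (1 / 2) * (∑' n : ℕ, ‖a n‖ * ‖A * B‖ ^ n) +
        (1 / 2) * min
          (∑' n : ℕ, ‖a n‖ * (Real.sqrt ‖A‖ * Real.sqrt ‖A * B ^ 2‖) ^ n)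
          (∑' n : ℕ, ‖a n‖ * (Real.sqrt ‖A ^ 2 * B‖ * Real.sqrt ‖B‖) ^ n) := by
  have hABR : ‖A‖ * ‖B‖ < R := by nlinarith [norm_nonneg A, norm_nonneg B]
  set t : ℝ := ‖A * B‖ with ht_def
  have ht0 : 0 ≤ t := norm_nonneg _
  have htR : t < R := lt_of_le_of_lt (norm_mul_le A B) hABR
  set s : ℝ := Real.sqrt ‖A‖ * Real.sqrt ‖A * B ^ 2‖ with hs_def
  set s' : ℝ := Real.sqrt ‖A ^ 2 * B‖ * Real.sqrt ‖B‖ with hs'_def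
  have hs0 : 0 ≤ s := by positivity
  have hs'0 : 0 ≤ s' := by positivity
  have hs_sq : s ^ 2 = ‖A‖ * ‖A * B ^ 2‖ := by
    rw [hs_def, mul_pow, Real.sq_sqrt (norm_nonneg _), Real.sq_sqrt (norm_nonneg _)]
  have hs'_sq : s' ^ 2 = ‖A ^ 2 * B‖ * ‖B‖ := by
    rw [hs'_def, mul_pow, Real.sq_sqrt (norm_nonneg _), Real.sq_sqrt (norm_nonneg _)]
  have hsR : s < R := by
    have h1 : ‖A * B ^ 2‖ ≤ ‖A‖ * ‖B‖ ^ 2 :=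
      (norm_mul_le _ _).trans (mul_le_mul_of_nonneg_left (opnorm_pow_le B 2) (norm_nonneg _))
    have h2 : s ^ 2 ≤ (‖A‖ * ‖B‖) ^ 2 := by
      rw [hs_sq]
      nlinarith [norm_nonneg A, norm_nonneg B]
    have h3 : s ≤ ‖A‖ * ‖B‖ := by
      have hP : (0:ℝ) ≤ ‖A‖ * ‖B‖ := by positivity
      have h4 := Real.sqrt_le_sqrt h2
      rwa [Real.sqrt_sq hs0, Real.sqrt_sq hP] at h4
    linarith
  have hs'R : s' < R := by
    have h1 : ‖A ^ 2 * B‖ ≤ ‖A‖ ^ 2 * ‖B‖ :=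
      (norm_mul_le _ _).trans (mul_le_mul_of_nonneg_right (opnorm_pow_le A 2) (norm_nonneg _))
    have h2 : s' ^ 2 ≤ (‖A‖ * ‖B‖) ^ 2 := by
      rw [hs'_sq]
      nlinarith [norm_nonneg A, norm_nonneg B]
    have h3 : s' ≤ ‖A‖ * ‖B‖ := by
      have hP : (0:ℝ) ≤ ‖A‖ * ‖B‖ := by positivity
      have h4 := Real.sqrt_le_sqrt h2
      rwa [Real.sqrt_sq hs'0, Real.sqrt_sq hP] at h4
    linarith
  set T : H →L[ℂ] H := A * B with hT_def
  have hT2 : T * T = A ^ 2 * B ^ 2 := by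
    rw [hT_def, pow_two, pow_two, mul_assoc, ← mul_assoc B A B, ← hcomm, mul_assoc, ← mul_assoc]
  have hA2B2_s : ‖A ^ 2 * B ^ 2‖ ≤ s ^ 2 := by
    rw [hs_sq, show A ^ 2 * B ^ 2 = A * (A * B ^ 2) by rw [pow_two, mul_assoc]]
    exact norm_mul_le _ _
  have hA2B2_s' : ‖A ^ 2 * B ^ 2‖ ≤ s' ^ 2 := by
    rw [hs'_sq, show A ^ 2 * B ^ 2 = (A ^ 2 * B) * B by rw [pow_two B, mul_assoc]]
    exact norm_mul_le _ _
  -- uniform power bound for a parameter `w` with `‖T*T‖ ≤ w^2`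
  have hTpow : ∀ w : ℝ, 0 ≤ w → ‖A ^ 2 * B ^ 2‖ ≤ w ^ 2 →
      ∀ n : ℕ, ‖T ^ (n + 1)‖ ≤ max t w * w ^ n := by
    intro w hw0 hw n
    have hT2w : ‖T ^ 2‖ ≤ w ^ 2 := by rw [pow_two, hT2]; exact hw
    rcases Nat.even_or_odd n with ⟨m, hm⟩ | ⟨m, hm⟩
    · subst hm
      have h1 : T ^ (m + m + 1) = (T ^ 2) ^ m * T := by
        rw [pow_succ, show m + m = 2 * m by omega, pow_mul]
      rw [h1]
      calc ‖(T ^ 2) ^ m * T‖ ≤ ‖(T ^ 2) ^ m‖ * ‖T‖ := norm_mul_le _ _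
        _ ≤ ‖T ^ 2‖ ^ m * t := by
            apply mul_le_mul_of_nonneg_right (opnorm_pow_le _ m) ht0
        _ ≤ (w ^ 2) ^ m * t :=
            mul_le_mul_of_nonneg_right (pow_le_pow_left₀ (norm_nonneg _) hT2w m) ht0
        _ = t * w ^ (m + m) := by rw [← pow_mul]; ring_nf
        _ ≤ max t w * w ^ (m + m) := by
            apply mul_le_mul_of_nonneg_right (le_max_left t w) (by positivity)
    · subst hm
      have h1 : T ^ (2 * m + 1 + 1) = (T ^ 2) ^ (m + 1) := by
        rw [← pow_mul]
        congr 1 <;> omega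
      rw [h1]
      calc ‖(T ^ 2) ^ (m + 1)‖ ≤ ‖T ^ 2‖ ^ (m + 1) := opnorm_pow_le _ _
        _ ≤ (w ^ 2) ^ (m + 1) := pow_le_pow_left₀ (norm_nonneg _) hT2w _
        _ = w * w ^ (2 * m + 1) := by rw [← pow_mul]; ring_nf
        _ ≤ max t w * w ^ (2 * m + 1) := by
            apply mul_le_mul_of_nonneg_right (le_max_right t w) (by positivity)
  have hTt : ∀ n : ℕ, ‖T ^ (n + 1)‖ ≤ t * t ^ n := by
    intro n
    calc ‖T ^ (n + 1)‖ ≤ ‖T‖ ^ (n + 1) := opnorm_pow_le T (n + 1)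
      _ = t * t ^ n := by rw [ht_def, pow_succ]; ring
  have hsum_t : Summable fun n : ℕ => ‖a n‖ * t ^ n := aux_summable a R hconv ht0 htR
  have hsum_s : Summable fun n : ℕ => ‖a n‖ * s ^ n := aux_summable a R hconv hs0 hsR
  have hsum_s' : Summable fun n : ℕ => ‖a n‖ * s' ^ n := aux_summable a R hconv hs'0 hs'R
  have h1 : (spectralRadius ℂ (∑' n : ℕ, a n • T ^ n)).toReal ≤ ∑' n : ℕ, ‖a n‖ * t ^ n :=
    core_lemma a T t t ht0 ht0 hsum_t hTt
  have h2 : (spectralRadius ℂ (∑' n : ℕ, a n • T ^ n)).toReal ≤ ∑' n : ℕ, ‖a n‖ * s ^ n :=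
    core_lemma a T s (max t s) hs0 (le_max_of_le_right hs0) hsum_s (hTpow s hs0 hA2B2_s)
  have h3 : (spectralRadius ℂ (∑' n : ℕ, a n • T ^ n)).toReal ≤ ∑' n : ℕ, ‖a n‖ * s' ^ n :=
    core_lemma a T s' (max t s') hs'0 (le_max_of_le_right hs'0) hsum_s' (hTpow s' hs'0 hA2B2_s')
  have hmin : (spectralRadius ℂ (∑' n : ℕ, a n • T ^ n)).toReal ≤
      min (∑' n : ℕ, ‖a n‖ * s ^ n) (∑' n : ℕ, ‖a n‖ * s' ^ n) := le_min h2 h3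
  linarith
end

section
/- Let f(z) = ∑_{n=0}^∞ a_n z^n be a power series with complex coefficients convergent on the open disk D(0,R) ⊂ ℂ with R > 0, and let f_a(z) := ∑_{n=0}^∞ |a_n| z^n. Let A, B be commuting bounded linear operators on a complex Hilbert space H with ‖A‖² < R and ‖B‖² < R. Then r(f(AB)) ≤ (1/2) f_a(‖AB‖) + (1/2) min{ f_a(‖A‖ ‖B²‖^{1/2}), f_a(‖A²‖^{1/2} ‖B‖) }. -/
set_option maxHeartbeats 1000000

open Filter Topology Finset
open scoped ENNReal NNReal


lemma aux_toReal_spectralRadius_pow_le {𝔸 : Type*} [NormedRing 𝔸] [NormedAlgebra ℂ 𝔸]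
    [CompleteSpace 𝔸] (a : 𝔸) (n : ℕ) :
    (spectralRadius ℂ a).toReal ^ (n + 1) ≤ ‖a ^ (n + 1)‖ * ‖(1 : 𝔸)‖ := by
  have h := spectrum.spectralRadius_le_pow_nnnorm_pow_one_div ℂ a n
  have hn : ((n : ℝ) + 1) ≠ 0 := by positivity
  have h2 : spectralRadius ℂ a ^ (n + 1) ≤ (‖a ^ (n + 1)‖₊ : ℝ≥0∞) * (‖(1 : 𝔸)‖₊ : ℝ≥0∞) := by
    calc spectralRadius ℂ a ^ (n + 1)
        ≤ ((‖a ^ (n + 1)‖₊ : ℝ≥0∞) ^ (1 / ((n : ℝ) + 1)) *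
            (‖(1 : 𝔸)‖₊ : ℝ≥0∞) ^ (1 / ((n : ℝ) + 1))) ^ (n + 1) := pow_le_pow_left' h _
      _ = (‖a ^ (n + 1)‖₊ : ℝ≥0∞) * (‖(1 : 𝔸)‖₊ : ℝ≥0∞) := by
          rw [← ENNReal.rpow_natCast _ (n + 1), ENNReal.mul_rpow_of_nonneg _ _ (by positivity),
            ← ENNReal.rpow_mul, ← ENNReal.rpow_mul]
          push_cast
          rw [one_div, inv_mul_cancel₀ hn, ENNReal.rpow_one, ENNReal.rpow_one]
  have hfin : (‖a ^ (n + 1)‖₊ : ℝ≥0∞) * (‖(1 : 𝔸)‖₊ : ℝ≥0∞) ≠ ⊤ := by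
    exact ENNReal.mul_ne_top ENNReal.coe_ne_top ENNReal.coe_ne_top
  have := ENNReal.toReal_mono hfin h2
  rwa [ENNReal.toReal_pow, ENNReal.toReal_mul, ENNReal.coe_toReal, ENNReal.coe_toReal,
    coe_nnnorm, coe_nnnorm] at this

lemma aux_le_of_pow_le_const_mul_pow {L M C : ℝ} (hL : 0 ≤ L) (hM : 0 ≤ M)
    (h : ∀ N : ℕ, L ^ (N + 1) ≤ C * M ^ (N + 1)) : L ≤ M := by
  by_contra hlt
  push_neg at hlt
  rcases eq_or_lt_of_le hM with h0 | hM0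
  · have h1 := h 0
    rw [← h0] at h1
    simp at h1
    linarith
  · have hx : 1 < L / M := (one_lt_div hM0).2 hlt
    obtain ⟨N, hN⟩ := pow_unbounded_of_one_lt C hx
    have h1 : (L / M) ^ (N + 1) ≤ C := by
      rw [div_pow, div_le_iff₀ (by positivity)]
      exact h N
    have h2 : (L / M) ^ N ≤ (L / M) ^ (N + 1) :=
      pow_le_pow_right₀ hx.le (Nat.le_succ N)
    linarith

lemma aux_key1 {𝔸 : Type*} [NormedRing 𝔸] [NormedAlgebra ℂ 𝔸] [CompleteSpace 𝔸]
    (T : 𝔸) (b : ℕ → ℂ) (s C : ℝ) (hs : 0 ≤ s) (hC : 0 ≤ C)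
    (hb : Summable fun n => ‖b n‖ * s ^ n)
    (hT : ∀ m : ℕ, ‖T ^ m‖ ≤ C * s ^ m) :
    (spectralRadius ℂ (∑' n : ℕ, b n • T ^ n)).toReal ≤ ∑' n : ℕ, ‖b n‖ * s ^ n := by
  set M : ℝ := ∑' n : ℕ, ‖b n‖ * s ^ n with hM
  have hM0 : 0 ≤ M := tsum_nonneg fun n => by positivity
  -- summable norms of operator series given weight-summable coefficients
  have opsum : ∀ c : ℕ → ℂ, (Summable fun n => ‖c n‖ * s ^ n) →
      Summable fun n => ‖c n • T ^ n‖ := by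
    intro c hc
    refine Summable.of_nonneg_of_le (fun n => norm_nonneg _) (fun n => ?_) (hc.mul_left C)
    rw [norm_smul]
    calc ‖c n‖ * ‖T ^ n‖ ≤ ‖c n‖ * (C * s ^ n) := by
          exact mul_le_mul_of_nonneg_left (hT n) (norm_nonneg _)
      _ = C * (‖c n‖ * s ^ n) := by ring
  -- the induction
  have claim : ∀ N : ℕ, ∃ c : ℕ → ℂ, (Summable fun n => ‖c n‖ * s ^ n) ∧
      (∑' n : ℕ, ‖c n‖ * s ^ n) ≤ M ^ (N + 1) ∧
      (∑' n : ℕ, b n • T ^ n) ^ (N + 1) = ∑' n : ℕ, c n • T ^ n := by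
    intro N
    induction N with
    | zero => exact ⟨b, hb, by rw [pow_one], by rw [pow_one]⟩
    | succ N ih =>
      obtain ⟨c, hc, hcM, hpow⟩ := ih
      have hMc0 : 0 ≤ ∑' n : ℕ, ‖c n‖ * s ^ n := tsum_nonneg fun n => by positivity
      have hprod : Summable fun x : ℕ × ℕ => (‖c x.1‖ * s ^ x.1) * (‖b x.2‖ * s ^ x.2) :=
        hc.mul_of_nonneg hb (fun n => by positivity) (fun n => by positivity)
      have hmaj : Summable fun n : ℕ =>
          ∑ kl ∈ antidiagonal n, (‖c kl.1‖ * s ^ kl.1) * (‖b kl.2‖ * s ^ kl.2) :=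
        summable_sum_mul_antidiagonal_of_summable_mul
          (f := fun k => ‖c k‖ * s ^ k) (g := fun k => ‖b k‖ * s ^ k) hprod
      have hle : ∀ n : ℕ, ‖∑ kl ∈ antidiagonal n, c kl.1 * b kl.2‖ * s ^ n ≤
          ∑ kl ∈ antidiagonal n, (‖c kl.1‖ * s ^ kl.1) * (‖b kl.2‖ * s ^ kl.2) := by
        intro n
        calc ‖∑ kl ∈ antidiagonal n, c kl.1 * b kl.2‖ * s ^ n
            ≤ (∑ kl ∈ antidiagonal n, ‖c kl.1‖ * ‖b kl.2‖) * s ^ n := by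
              apply mul_le_mul_of_nonneg_right _ (by positivity)
              refine (norm_sum_le _ _).trans ?_
              exact Finset.sum_le_sum fun kl _ => le_of_eq (norm_mul _ _)
          _ = ∑ kl ∈ antidiagonal n, (‖c kl.1‖ * s ^ kl.1) * (‖b kl.2‖ * s ^ kl.2) := by
              rw [Finset.sum_mul]
              refine Finset.sum_congr rfl fun kl hkl => ?_
              have : kl.1 + kl.2 = n := Finset.HasAntidiagonal.mem_antidiagonal.mp hkl
              rw [← this, pow_add]
              ring
      have hwsum : Summable fun n : ℕ =>
          ‖∑ kl ∈ antidiagonal n, c kl.1 * b kl.2‖ * s ^ n :=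
        Summable.of_nonneg_of_le (fun n => by positivity) hle hmaj
      refine ⟨fun n => ∑ kl ∈ antidiagonal n, c kl.1 * b kl.2, hwsum, ?_, ?_⟩
      · calc (∑' n : ℕ, ‖∑ kl ∈ antidiagonal n, c kl.1 * b kl.2‖ * s ^ n)
            ≤ ∑' n : ℕ, ∑ kl ∈ antidiagonal n, (‖c kl.1‖ * s ^ kl.1) * (‖b kl.2‖ * s ^ kl.2) :=
              Summable.tsum_le_tsum hle hwsum hmaj
          _ = (∑' n : ℕ, ‖c n‖ * s ^ n) * M :=
              (Summable.tsum_mul_tsum_eq_tsum_sum_antidiagonal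
                (f := fun k => ‖c k‖ * s ^ k) (g := fun k => ‖b k‖ * s ^ k) hc hb hprod).symm
          _ ≤ M ^ (N + 1) * M := mul_le_mul_of_nonneg_right hcM hM0
          _ = M ^ (N + 1 + 1) := by ring
      · rw [pow_succ, hpow,
          tsum_mul_tsum_eq_tsum_sum_antidiagonal_of_summable_norm (opsum c hc) (opsum b hb)]
        refine tsum_congr fun n => ?_
        rw [Finset.sum_smul]
        refine Finset.sum_congr rfl fun kl hkl => ?_
        have hkln : kl.1 + kl.2 = n := Finset.HasAntidiagonal.mem_antidiagonal.mp hkl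
        rw [smul_mul_smul_comm, ← pow_add, hkln]
    -- end induction
  -- now the spectral radius bound
  have hL0 : 0 ≤ (spectralRadius ℂ (∑' n : ℕ, b n • T ^ n)).toReal := ENNReal.toReal_nonneg
  refine aux_le_of_pow_le_const_mul_pow (C := C * ‖(1 : 𝔸)‖) hL0 hM0 fun N => ?_
  obtain ⟨c, hc, hcM, hpow⟩ := claim N
  have h1 := aux_toReal_spectralRadius_pow_le (∑' n : ℕ, b n • T ^ n) N
  rw [hpow] at h1
  have h2 : ‖∑' n : ℕ, c n • T ^ n‖ ≤ C * M ^ (N + 1) := by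
    calc ‖∑' n : ℕ, c n • T ^ n‖ ≤ ∑' n : ℕ, ‖c n • T ^ n‖ := norm_tsum_le_tsum_norm (opsum c hc)
      _ ≤ ∑' n : ℕ, C * (‖c n‖ * s ^ n) := by
          refine Summable.tsum_le_tsum (fun n => ?_) (opsum c hc) (hc.mul_left C)
          rw [norm_smul]
          calc ‖c n‖ * ‖T ^ n‖ ≤ ‖c n‖ * (C * s ^ n) :=
                mul_le_mul_of_nonneg_left (hT n) (norm_nonneg _)
            _ = C * (‖c n‖ * s ^ n) := by ring
      _ = C * ∑' n : ℕ, ‖c n‖ * s ^ n := by rw [tsum_mul_left]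
      _ ≤ C * M ^ (N + 1) := mul_le_mul_of_nonneg_left hcM hC
  calc (spectralRadius ℂ (∑' n : ℕ, b n • T ^ n)).toReal ^ (N + 1)
      ≤ ‖∑' n : ℕ, c n • T ^ n‖ * ‖(1 : 𝔸)‖ := h1
    _ ≤ (C * M ^ (N + 1)) * ‖(1 : 𝔸)‖ := mul_le_mul_of_nonneg_right h2 (norm_nonneg _)
    _ = (C * ‖(1 : 𝔸)‖) * M ^ (N + 1) := by ring

lemma aux_key2 {𝔸 : Type*} [NormedRing 𝔸] [NormedAlgebra ℂ 𝔸] [CompleteSpace 𝔸]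
    (T : 𝔸) (b : ℕ → ℂ) (s ρ : ℝ) (hs : 0 ≤ s) (hsρ : s < ρ)
    (hb : Summable fun n => ‖b n‖ * ρ ^ n)
    (hT : ∀ ε : ℝ, 0 < ε → ∃ C : ℝ, 0 ≤ C ∧ ∀ m : ℕ, ‖T ^ m‖ ≤ C * (s + ε) ^ m) :
    (spectralRadius ℂ (∑' n : ℕ, b n • T ^ n)).toReal ≤ ∑' n : ℕ, ‖b n‖ * s ^ n := by
  have hsum_at : ∀ t : ℝ, 0 ≤ t → t ≤ ρ → Summable fun n => ‖b n‖ * t ^ n := by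
    intro t ht htρ
    refine Summable.of_nonneg_of_le (fun n => by positivity) (fun n => ?_) hb
    exact mul_le_mul_of_nonneg_left (pow_le_pow_left₀ ht htρ n) (norm_nonneg _)
  -- tendsto of the tsum as ε → 0⁺
  have htend : Tendsto (fun ε : ℝ => ∑' n : ℕ, ‖b n‖ * (s + ε) ^ n) (𝓝[>] (0 : ℝ))
      (𝓝 (∑' n : ℕ, ‖b n‖ * s ^ n)) := by
    refine tendsto_tsum_of_dominated_convergence (bound := fun n => ‖b n‖ * ρ ^ n) hb
      (fun k => ?_) ?_
    · have hcont : Continuous fun ε : ℝ => ‖b k‖ * (s + ε) ^ k := by continuity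
      have := (hcont.tendsto 0).mono_left (nhdsWithin_le_nhds (s := Set.Ioi (0:ℝ)))
      simpa using this
    · filter_upwards [Ioc_mem_nhdsGT_of_mem (Set.mem_Ico.mpr ⟨le_refl (0:ℝ), sub_pos.mpr hsρ⟩)]
        with ε hε k
      have hε0 : 0 < ε := hε.1
      have hεle : s + ε ≤ ρ := by have := hε.2; linarith
      rw [Real.norm_eq_abs, abs_of_nonneg (by positivity)]
      exact mul_le_mul_of_nonneg_left (pow_le_pow_left₀ (by linarith) hεle k) (norm_nonneg _)
  refine ge_of_tendsto htend ?_
  filter_upwards [Ioc_mem_nhdsGT_of_mem (Set.mem_Ico.mpr ⟨le_refl (0:ℝ), sub_pos.mpr hsρ⟩)]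
    with ε hε
  obtain ⟨C, hC0, hCb⟩ := hT ε hε.1
  exact aux_key1 T b (s + ε) C (by linarith [hε.1]) hC0
    (hsum_at (s + ε) (by linarith [hε.1]) (by linarith [hε.2])) hCb

lemma aux_clm_norm_pow_le {H : Type*} [NormedAddCommGroup H] [NormedSpace ℂ H]
    (X : H →L[ℂ] H) (k : ℕ) : ‖X ^ k‖ ≤ ‖X‖ ^ k := by
  cases k with
  | zero =>
    rw [pow_zero, pow_zero]
    exact (ContinuousLinearMap.norm_id_le).trans_eq' (by rw [ContinuousLinearMap.one_def])
  | succ k => exact norm_pow_le' X k.succ_pos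

lemma aux_pow_norm_bound {H : Type*} [NormedAddCommGroup H] [NormedSpace ℂ H]
    (X Y : H →L[ℂ] H) (hc : X * Y = Y * X) (ε : ℝ) (hε : 0 < ε) :
    ∃ C : ℝ, 0 ≤ C ∧ ∀ m : ℕ, ‖(X * Y) ^ m‖ ≤ C * (‖X‖ * Real.sqrt ‖Y ^ 2‖ + ε) ^ m := by
  set s := ‖X‖ * Real.sqrt ‖Y ^ 2‖ with hs
  have hs0 : 0 ≤ s := by positivity
  have hsε : 0 < s + ε := by linarith
  set C := max 1 ((‖X‖ * ‖Y‖) / (s + ε)) with hCdef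
  have hC1 : (1 : ℝ) ≤ C := le_max_left _ _
  have hC0 : (0 : ℝ) ≤ C := zero_le_one.trans hC1
  have hCq : ‖X‖ * ‖Y‖ ≤ C * (s + ε) := by
    have h := le_max_right 1 ((‖X‖ * ‖Y‖) / (s + ε))
    calc ‖X‖ * ‖Y‖ = ((‖X‖ * ‖Y‖) / (s + ε)) * (s + ε) := by field_simp
      _ ≤ C * (s + ε) := mul_le_mul_of_nonneg_right h hsε.le
  have hsq : s ^ 2 = ‖X‖ ^ 2 * ‖Y ^ 2‖ := by
    rw [hs, mul_pow, Real.sq_sqrt (norm_nonneg _)]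
  have hcomm' : Commute X Y := hc
  have hXYn : ∀ n : ℕ, ‖(X * Y) ^ n‖ ≤ ‖X‖ ^ n * ‖Y ^ n‖ := fun n => by
    rw [hcomm'.mul_pow]
    exact (norm_mul_le _ _).trans
      (mul_le_mul_of_nonneg_right (aux_clm_norm_pow_le X n) (norm_nonneg _))
  refine ⟨C, hC0, fun m => ?_⟩
  rcases Nat.even_or_odd m with ⟨k, hk⟩ | ⟨k, hk⟩
  · -- even case : m = 2 * k
    rw [hk, ← two_mul]
    have hY : ‖Y ^ (2 * k)‖ ≤ ‖Y ^ 2‖ ^ k := by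
      rw [pow_mul]
      exact aux_clm_norm_pow_le (Y ^ 2) k
    calc ‖(X * Y) ^ (2 * k)‖ ≤ ‖X‖ ^ (2 * k) * ‖Y ^ (2 * k)‖ := hXYn _
      _ ≤ ‖X‖ ^ (2 * k) * ‖Y ^ 2‖ ^ k :=
          mul_le_mul_of_nonneg_left hY (by positivity)
      _ = (‖X‖ ^ 2 * ‖Y ^ 2‖) ^ k := by rw [mul_pow, pow_mul]
      _ = (s ^ 2) ^ k := by rw [hsq]
      _ = s ^ (2 * k) := by rw [← pow_mul]
      _ ≤ (s + ε) ^ (2 * k) := pow_le_pow_left₀ hs0 (by linarith) _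
      _ ≤ C * (s + ε) ^ (2 * k) := le_mul_of_one_le_left (by positivity) hC1
  · -- odd case : m = 2 * k + 1
    rw [hk]
    have hY : ‖Y ^ (2 * k + 1)‖ ≤ ‖Y ^ 2‖ ^ k * ‖Y‖ := by
      rw [pow_succ]
      refine (norm_mul_le _ _).trans (mul_le_mul_of_nonneg_right ?_ (norm_nonneg _))
      rw [pow_mul]
      exact aux_clm_norm_pow_le (Y ^ 2) k
    calc ‖(X * Y) ^ (2 * k + 1)‖ ≤ ‖X‖ ^ (2 * k + 1) * ‖Y ^ (2 * k + 1)‖ := hXYn _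
      _ ≤ ‖X‖ ^ (2 * k + 1) * (‖Y ^ 2‖ ^ k * ‖Y‖) :=
          mul_le_mul_of_nonneg_left hY (by positivity)
      _ = (‖X‖ ^ 2 * ‖Y ^ 2‖) ^ k * (‖X‖ * ‖Y‖) := by
          rw [mul_pow, pow_succ, pow_mul]; ring
      _ = (s ^ 2) ^ k * (‖X‖ * ‖Y‖) := by rw [hsq]
      _ ≤ ((s + ε) ^ 2) ^ k * (C * (s + ε)) := by
          refine mul_le_mul (pow_le_pow_left₀ (by positivity) (by nlinarith) k) hCq
            (by positivity) (by positivity)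
      _ = C * (s + ε) ^ (2 * k + 1) := by rw [← pow_mul, pow_succ]; ring

/-- For commuting `A`, `B` with `‖A‖² < R`, `‖B‖² < R`, one has
`r(f(AB)) ≤ (1/2) f_a(‖AB‖) + (1/2) min { f_a(‖A‖ ‖B²‖^{1/2}), f_a(‖A²‖^{1/2} ‖B‖) }`. -/
theorem spectralRadius_powerSeries_mul_le_min_sq_bound
    {H : Type*} [NormedAddCommGroup H] [InnerProductSpace ℂ H] [CompleteSpace H]
    (a : ℕ → ℂ) (R : ℝ) (hR : 0 < R)
    (hconv : ∀ z : ℂ, ‖z‖ < R → Summable fun n : ℕ => a n * z ^ n)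
    (A B : H →L[ℂ] H) (hcomm : A * B = B * A)
    (hA : ‖A‖ ^ 2 < R) (hB : ‖B‖ ^ 2 < R) :
    (spectralRadius ℂ (∑' n : ℕ, a n • (A * B) ^ n)).toReal ≤
      (1 / 2) * (∑' n : ℕ, ‖a n‖ * ‖A * B‖ ^ n) +
        (1 / 2) * min
          (∑' n : ℕ, ‖a n‖ * (‖A‖ * Real.sqrt ‖B ^ 2‖) ^ n)
          (∑' n : ℕ, ‖a n‖ * (Real.sqrt ‖A ^ 2‖ * ‖B‖) ^ n) := by
  have hA0 : (0 : ℝ) ≤ ‖A‖ := norm_nonneg A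
  have hB0 : (0 : ℝ) ≤ ‖B‖ := norm_nonneg B
  set P : ℝ := ‖A‖ * ‖B‖ with hP
  have hP0 : 0 ≤ P := by positivity
  have hPR : P < R := by nlinarith [sq_nonneg (‖A‖ - ‖B‖)]
  obtain ⟨ρ, hPρ, hρR⟩ : ∃ ρ : ℝ, P < ρ ∧ ρ < R := ⟨(P + R) / 2, by linarith, by linarith⟩
  have hρ0 : 0 ≤ ρ := le_of_lt (lt_of_le_of_lt hP0 hPρ)
  obtain ⟨ρ', hρρ', hρ'R⟩ : ∃ t : ℝ, ρ < t ∧ t < R := ⟨(ρ + R) / 2, by linarith, by linarith⟩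
  have hρ'0 : 0 < ρ' := lt_of_le_of_lt hρ0 hρρ'
  -- summability of the majorant series at ρ
  have hsum' : Summable fun n : ℕ => a n * (ρ' : ℂ) ^ n := by
    refine hconv (ρ' : ℂ) ?_
    rw [Complex.norm_real, Real.norm_eq_abs, abs_of_pos hρ'0]
    exact hρ'R
  have hnorm_eq : ∀ n : ℕ, ‖a n * (ρ' : ℂ) ^ n‖ = ‖a n‖ * ρ' ^ n := by
    intro n
    rw [norm_mul, norm_pow, Complex.norm_real, Real.norm_eq_abs, abs_of_pos hρ'0]
  have htend0 : Tendsto (fun n : ℕ => ‖a n‖ * ρ' ^ n) atTop (𝓝 0) := by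
    have := hsum'.tendsto_atTop_zero.norm
    rw [norm_zero] at this
    simpa [hnorm_eq, abs_of_pos hρ'0] using this
  obtain ⟨K, hK⟩ := htend0.bddAbove_range
  have hKb : ∀ n : ℕ, ‖a n‖ * ρ' ^ n ≤ K := fun n => hK (Set.mem_range_self n)
  have hsumρ : Summable fun n : ℕ => ‖a n‖ * ρ ^ n := by
    have hgeo : Summable fun n : ℕ => K * (ρ / ρ') ^ n :=
      (summable_geometric_of_lt_one (by positivity) (by
        rw [div_lt_one hρ'0]; exact hρρ')).mul_left K
    refine Summable.of_nonneg_of_le (fun n => by positivity) (fun n => ?_) hgeo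
    calc ‖a n‖ * ρ ^ n = (‖a n‖ * ρ' ^ n) * (ρ / ρ') ^ n := by
          have hne : ρ' ^ n ≠ 0 := by positivity
          rw [div_pow]
          field_simp
      _ ≤ K * (ρ / ρ') ^ n :=
          mul_le_mul_of_nonneg_right (hKb n) (by positivity)
  -- the three spectral radius bounds
  set L : ℝ := (spectralRadius ℂ (∑' n : ℕ, a n • (A * B) ^ n)).toReal with hL
  have h1 : L ≤ ∑' n : ℕ, ‖a n‖ * ‖A * B‖ ^ n := by
    refine aux_key2 (A * B) a ‖A * B‖ ρ (norm_nonneg _)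
      (lt_of_le_of_lt (norm_mul_le A B) hPρ) hsumρ fun ε hε => ?_
    refine ⟨1, zero_le_one, fun m => ?_⟩
    rw [one_mul]
    exact (aux_clm_norm_pow_le (A * B) m).trans
      (pow_le_pow_left₀ (norm_nonneg _) (by linarith) m)
  have hsB : ‖A‖ * Real.sqrt ‖B ^ 2‖ ≤ P := by
    rw [hP]
    refine mul_le_mul_of_nonneg_left ?_ hA0
    calc Real.sqrt ‖B ^ 2‖ ≤ Real.sqrt (‖B‖ ^ 2) :=
          Real.sqrt_le_sqrt (aux_clm_norm_pow_le B 2)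
      _ = ‖B‖ := Real.sqrt_sq hB0
  have hsA : Real.sqrt ‖A ^ 2‖ * ‖B‖ ≤ P := by
    rw [hP]
    refine mul_le_mul_of_nonneg_right ?_ hB0
    calc Real.sqrt ‖A ^ 2‖ ≤ Real.sqrt (‖A‖ ^ 2) :=
          Real.sqrt_le_sqrt (aux_clm_norm_pow_le A 2)
      _ = ‖A‖ := Real.sqrt_sq hA0
  have h2 : L ≤ ∑' n : ℕ, ‖a n‖ * (‖A‖ * Real.sqrt ‖B ^ 2‖) ^ n := by
    refine aux_key2 (A * B) a (‖A‖ * Real.sqrt ‖B ^ 2‖) ρ (by positivity)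
      (lt_of_le_of_lt hsB hPρ) hsumρ fun ε hε => aux_pow_norm_bound A B hcomm ε hε
  have h3 : L ≤ ∑' n : ℕ, ‖a n‖ * (Real.sqrt ‖A ^ 2‖ * ‖B‖) ^ n := by
    refine aux_key2 (A * B) a (Real.sqrt ‖A ^ 2‖ * ‖B‖) ρ (by positivity)
      (lt_of_le_of_lt hsA hPρ) hsumρ fun ε hε => ?_
    obtain ⟨C, hC0, hC⟩ := aux_pow_norm_bound B A hcomm.symm ε hε
    refine ⟨C, hC0, fun m => ?_⟩
    rw [hcomm, mul_comm (Real.sqrt ‖A ^ 2‖) ‖B‖]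
    exact hC m
  rcases le_total (∑' n : ℕ, ‖a n‖ * (‖A‖ * Real.sqrt ‖B ^ 2‖) ^ n)
      (∑' n : ℕ, ‖a n‖ * (Real.sqrt ‖A ^ 2‖ * ‖B‖) ^ n) with h | h
  · rw [min_eq_left h]; linarith
  · rw [min_eq_right h]; linarith
end

section
/- Let A, B be commuting bounded linear operators on a complex Hilbert space H. Then r(exp(AB)) ≤ (1/2)[ exp(‖AB‖) + exp(‖A²‖^{1/2} ‖B²‖^{1/2}) ], where exp(AB) = ∑_{n=0}^∞ (AB)^n/n! is the operator exponential. -/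
open Filter NormedSpace
set_option maxHeartbeats 1000000

lemma kittaneh_key {𝔸 : Type*} [NormedRing 𝔸] [NormedAlgebra ℂ 𝔸] [CompleteSpace 𝔸]
    (x : 𝔸) (C s : ℝ) (hC : 1 ≤ C) (hs : 0 ≤ s)
    (hk : ∀ k : ℕ, ‖x ^ k‖ ≤ C * s ^ (2 * (k / 2))) (m : ℕ) :
    ‖NormedSpace.exp x ^ m‖ ≤ C * (1 + m) * Real.exp (m * s) := by
  have hC0 : (0:ℝ) < C := lt_of_lt_of_le one_pos hC
  have hm0 : (0:ℝ) ≤ m := Nat.cast_nonneg m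
  set g : ℕ → ℝ := fun k => C * ((m:ℝ) ^ k * s ^ (2 * (k / 2)) / k.factorial) with hg
  have hgnonneg : ∀ k, 0 ≤ g k := fun k => by
    have := hs; positivity
  have hexp : NormedSpace.exp x ^ m = NormedSpace.exp ((m : ℂ) • x) := by
    letI : NormedAlgebra ℚ 𝔸 := NormedAlgebra.restrictScalars ℚ ℂ 𝔸
    rw [← NormedSpace.exp_nsmul, Nat.cast_smul_eq_nsmul]
  have hterm : ∀ k : ℕ, ‖((k.factorial : ℂ))⁻¹ • ((m:ℂ) • x) ^ k‖ ≤ g k := by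
    intro k
    rw [smul_pow, smul_smul, norm_smul]
    have hcoef : ‖((k.factorial : ℂ))⁻¹ * (m:ℂ) ^ k‖ = (m:ℝ) ^ k / k.factorial := by
      rw [norm_mul, norm_inv, norm_pow, Complex.norm_natCast, Complex.norm_natCast,
        div_eq_inv_mul]
    rw [hcoef]
    calc (m:ℝ) ^ k / k.factorial * ‖x ^ k‖
        ≤ (m:ℝ) ^ k / k.factorial * (C * s ^ (2 * (k / 2))) := by
          gcongr
          exact hk k
      _ = g k := by rw [hg]; ring
  have hgsum : Summable g := by
    refine Summable.of_nonneg_of_le hgnonneg (fun k => ?_)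
      ((Real.summable_pow_div_factorial ((m:ℝ) * max 1 s)).mul_left C)
    have h1 : s ^ (2 * (k / 2)) ≤ (max 1 s) ^ k :=
      le_trans (pow_le_pow_left₀ hs (le_max_right _ _) _)
        (pow_le_pow_right₀ (le_max_left _ _) (by omega))
    calc g k = C * ((m:ℝ) ^ k * s ^ (2 * (k / 2)) / k.factorial) := rfl
      _ ≤ C * ((m:ℝ) ^ k * (max 1 s) ^ k / k.factorial) := by gcongr
      _ = C * (((m:ℝ) * max 1 s) ^ k / k.factorial) := by rw [mul_pow]
  have hnorm : ‖NormedSpace.exp x ^ m‖ ≤ ∑' k, g k := by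
    rw [hexp, NormedSpace.exp_eq_tsum ℂ]
    refine (norm_tsum_le_tsum_norm
      (NormedSpace.norm_expSeries_summable' (𝕂 := ℂ) ((m:ℂ) • x))).trans ?_
    exact Summable.tsum_le_tsum hterm (NormedSpace.norm_expSeries_summable' (𝕂 := ℂ) ((m:ℂ) • x)) hgsum
  have hge : Summable fun j => g (2 * j) :=
    hgsum.comp_injective (mul_right_injective₀ two_ne_zero)
  have hgo : Summable fun j => g (2 * j + 1) :=
    hgsum.comp_injective (fun i j h => by omega)
  have hsplit : ∑' k, g k = (∑' j, g (2 * j)) + ∑' j, g (2 * j + 1) :=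
    (tsum_even_add_odd hge hgo).symm
  have hexpsum : Real.exp ((m:ℝ) * s) = ∑' k : ℕ, ((m:ℝ) * s) ^ k / k.factorial := by
    rw [Real.exp_eq_exp_ℝ, NormedSpace.exp_eq_tsum_div]
  have hFs : Summable fun k : ℕ => ((m:ℝ) * s) ^ k / k.factorial :=
    Real.summable_pow_div_factorial _
  have heq_even : ∀ j, g (2 * j) = C * (((m:ℝ) * s) ^ (2 * j) / (2 * j).factorial) := by
    intro j
    simp only [hg]
    have h2 : 2 * j / 2 = j := by omega
    rw [h2, mul_pow]
  have heven_le : ∑' j, g (2 * j) ≤ C * Real.exp ((m:ℝ) * s) := by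
    rw [hexpsum, tsum_congr heq_even, tsum_mul_left]
    refine mul_le_mul_of_nonneg_left ?_ hC0.le
    refine Summable.tsum_le_tsum_of_inj (fun j => 2 * j) (mul_right_injective₀ two_ne_zero)
      (fun c _ => by positivity) (fun j => le_rfl) ?_ hFs
    exact hFs.comp_injective (mul_right_injective₀ two_ne_zero)
  have hodd_le : ∑' j, g (2 * j + 1) ≤ C * (m:ℝ) * Real.exp ((m:ℝ) * s) := by
    have hle : ∀ j, g (2 * j + 1) ≤ C * (m:ℝ) * (((m:ℝ) * s) ^ (2 * j) / (2 * j).factorial) := by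
      intro j
      simp only [hg]
      have h2 : (2 * j + 1) / 2 = j := by omega
      rw [h2, pow_succ]
      have hfact : ((2 * j).factorial : ℝ) ≤ ((2 * j + 1).factorial : ℝ) := by
        exact_mod_cast Nat.factorial_le (by omega)
      calc C * ((m:ℝ) ^ (2 * j) * (m:ℝ) * s ^ (2 * j) / (2 * j + 1).factorial)
          ≤ C * ((m:ℝ) ^ (2 * j) * (m:ℝ) * s ^ (2 * j) / (2 * j).factorial) := by
            gcongr
        _ = C * (m:ℝ) * (((m:ℝ) * s) ^ (2 * j) / (2 * j).factorial) := by
            rw [mul_pow]; ring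
    have hmaj : Summable fun j => C * (m:ℝ) * (((m:ℝ) * s) ^ (2 * j) / (2 * j).factorial) :=
      (hFs.comp_injective (mul_right_injective₀ two_ne_zero)).mul_left _
    have step1 : ∑' j, g (2 * j + 1)
        ≤ ∑' j, C * (m:ℝ) * (((m:ℝ) * s) ^ (2 * j) / (2 * j).factorial) :=
      Summable.tsum_le_tsum hle hgo hmaj
    have step2 : ∑' j, C * (m:ℝ) * (((m:ℝ) * s) ^ (2 * j) / (2 * j).factorial)
        = C * (m:ℝ) * ∑' j, (((m:ℝ) * s) ^ (2 * j) / (2 * j).factorial) := tsum_mul_left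
    have step3 : ∑' j, (((m:ℝ) * s) ^ (2 * j) / (2 * j).factorial) ≤ Real.exp ((m:ℝ) * s) := by
      rw [hexpsum]
      refine Summable.tsum_le_tsum_of_inj (fun j => 2 * j) (mul_right_injective₀ two_ne_zero)
        (fun c _ => by positivity) (fun j => le_rfl) ?_ hFs
      exact hFs.comp_injective (mul_right_injective₀ two_ne_zero)
    have : C * (m:ℝ) * ∑' j, (((m:ℝ) * s) ^ (2 * j) / (2 * j).factorial)
        ≤ C * (m:ℝ) * Real.exp ((m:ℝ) * s) :=
      mul_le_mul_of_nonneg_left step3 (by positivity)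
    linarith
  calc ‖NormedSpace.exp x ^ m‖ ≤ ∑' k, g k := hnorm
    _ = (∑' j, g (2 * j)) + ∑' j, g (2 * j + 1) := hsplit
    _ ≤ C * Real.exp ((m:ℝ) * s) + C * (m:ℝ) * Real.exp ((m:ℝ) * s) :=
        add_le_add heven_le hodd_le
    _ = C * (1 + m) * Real.exp ((m:ℝ) * s) := by ring


lemma kittaneh_aux_tendsto (C : ℝ) (hC : 0 < C) :
    Tendsto (fun n : ℕ => (C * ((n : ℝ) + 2)) ^ ((1 : ℝ) / ((n : ℝ) + 1))) atTop (nhds 1) := by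
  have hpos : ∀ n : ℕ, (0:ℝ) < C * ((n : ℝ) + 2) := fun n => by positivity
  have h1 : Tendsto (fun n : ℕ => Real.log (C * ((n : ℝ) + 2)) * (1 / ((n : ℝ) + 1)))
      atTop (nhds 0) := by
    have hlogC : Tendsto (fun n : ℕ => Real.log C * (1 / ((n:ℝ) + 1))) atTop (nhds 0) := by
      simpa using tendsto_one_div_add_atTop_nhds_zero_nat.const_mul (Real.log C)
    have hlog2 : Tendsto (fun n : ℕ => Real.log ((n:ℝ) + 2) * (1 / ((n:ℝ) + 1))) atTop (nhds 0) := by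
      have h := Real.tendsto_pow_log_div_mul_add_atTop 1 (-1) 1 one_ne_zero
      have hcomp : Tendsto (fun n : ℕ => ((n:ℝ) + 2)) atTop atTop :=
        tendsto_atTop_add_const_right _ 2 tendsto_natCast_atTop_atTop
      have h2 := h.comp hcomp
      refine h2.congr fun n => ?_
      simp only [Function.comp_apply, pow_one, one_mul]
      rw [mul_one_div]
      ring_nf
    have h3 := hlogC.add hlog2
    rw [add_zero] at h3
    refine h3.congr fun n => ?_
    rw [Real.log_mul (ne_of_gt hC) (by positivity)]
    ring
  have h4 := (Real.continuous_exp.tendsto 0).comp h1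
  rw [Real.exp_zero] at h4
  refine h4.congr fun n => ?_
  simp only [Function.comp_apply]
  rw [Real.rpow_def_of_pos (hpos n)]

/-- For commuting `A`, `B`,
`r(exp(AB)) ≤ (1/2)[exp(‖AB‖) + exp(‖A²‖^{1/2} ‖B²‖^{1/2})]`. -/
theorem spectralRadius_exp_mul_le_kittaneh
    {H : Type*} [NormedAddCommGroup H] [InnerProductSpace ℂ H] [CompleteSpace H]
    (A B : H →L[ℂ] H) (hcomm : A * B = B * A) :
    (spectralRadius ℂ (∑' n : ℕ, ((n.factorial : ℂ))⁻¹ • (A * B) ^ n)).toReal ≤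
      (1 / 2) * (Real.exp ‖A * B‖ +
        Real.exp (Real.sqrt ‖A ^ 2‖ * Real.sqrt ‖B ^ 2‖)) := by
  rcases subsingleton_or_nontrivial H with hH | hH
  · have hspec : spectrum ℂ (∑' n : ℕ, ((n.factorial : ℂ))⁻¹ • (A * B) ^ n) = ∅ := by
      ext k
      simp [spectrum.mem_iff, isUnit_of_subsingleton]
    rw [spectralRadius, hspec]
    simp only [Set.mem_empty_iff_false, iSup_false, iSup_bot, ENNReal.bot_eq_zero,
      ENNReal.toReal_zero, ciSup_const]
    positivity
  · set x := A * B with hx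
    have htsum : (∑' n : ℕ, ((n.factorial : ℂ))⁻¹ • (A * B) ^ n) = NormedSpace.exp x := by
      rw [NormedSpace.exp_eq_tsum ℂ]
    rw [htsum]
    set a := NormedSpace.exp x with ha
    set s := Real.sqrt ‖A ^ 2‖ * Real.sqrt ‖B ^ 2‖ with hs
    have hs0 : 0 ≤ s := mul_nonneg (Real.sqrt_nonneg _) (Real.sqrt_nonneg _)
    have hs2 : ‖A ^ 2‖ * ‖B ^ 2‖ = s ^ 2 := by
      rw [hs, mul_pow, Real.sq_sqrt (norm_nonneg _), Real.sq_sqrt (norm_nonneg _)]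
    set C : ℝ := 1 + ‖x‖ with hCdef
    have hC1 : (1:ℝ) ≤ C := le_add_of_nonneg_right (norm_nonneg x)
    have hC0 : (0:ℝ) < C := lt_of_lt_of_le one_pos hC1
    -- even power bound
    have hxeven : ∀ j : ℕ, ‖x ^ (2 * j)‖ ≤ s ^ (2 * j) := by
      intro j
      have h1 : x ^ (2 * j) = (A ^ 2) ^ j * (B ^ 2) ^ j := by
        rw [hx, (Commute.mul_pow hcomm (2 * j)), pow_mul, pow_mul]
      calc ‖x ^ (2 * j)‖ = ‖(A ^ 2) ^ j * (B ^ 2) ^ j‖ := by rw [h1]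
        _ ≤ ‖(A ^ 2) ^ j‖ * ‖(B ^ 2) ^ j‖ := norm_mul_le _ _
        _ ≤ ‖A ^ 2‖ ^ j * ‖B ^ 2‖ ^ j :=
            mul_le_mul (norm_pow_le _ _) (norm_pow_le _ _) (norm_nonneg _)
              (pow_nonneg (norm_nonneg _) _)
        _ = (‖A ^ 2‖ * ‖B ^ 2‖) ^ j := (mul_pow _ _ _).symm
        _ = (s ^ 2) ^ j := by rw [hs2]
        _ = s ^ (2 * j) := (pow_mul s 2 j).symm
    -- general power bound
    have hkpow : ∀ k : ℕ, ‖x ^ k‖ ≤ C * s ^ (2 * (k / 2)) := by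
      intro k
      rcases Nat.even_or_odd k with ⟨j, rfl⟩ | ⟨j, rfl⟩
      · have h2 : j + j = 2 * j := (two_mul j).symm
        have hdiv : (j + j) / 2 = j := by omega
        rw [hdiv, h2]
        exact (hxeven j).trans (le_mul_of_one_le_left (pow_nonneg hs0 _) hC1)
      · have hdiv : (2 * j + 1) / 2 = j := by omega
        rw [hdiv, pow_succ]
        calc ‖x ^ (2 * j) * x‖ ≤ ‖x ^ (2 * j)‖ * ‖x‖ := norm_mul_le _ _
          _ ≤ s ^ (2 * j) * ‖x‖ := mul_le_mul_of_nonneg_right (hxeven j) (norm_nonneg x)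
          _ = ‖x‖ * s ^ (2 * j) := mul_comm _ _
          _ ≤ C * s ^ (2 * j) := mul_le_mul_of_nonneg_right
              (le_add_of_nonneg_left one_pos.le) (pow_nonneg hs0 _)
    have hkey := kittaneh_key x C s hC1 hs0 hkpow
    -- first bound : r ≤ exp ‖x‖
    have hb1 : (spectralRadius ℂ a).toReal ≤ Real.exp ‖x‖ := by
      have h1 := spectrum.spectralRadius_le_nnnorm (𝕜 := ℂ) a
      have h2 : (spectralRadius ℂ a).toReal ≤ ‖a‖ := by
        simpa using ENNReal.toReal_mono ENNReal.coe_ne_top h1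
      refine h2.trans ?_
      rw [ha, NormedSpace.exp_eq_tsum ℂ]
      refine (norm_tsum_le_tsum_norm (NormedSpace.norm_expSeries_summable' (𝕂 := ℂ) x)).trans ?_
      have hexpsum : Real.exp ‖x‖ = ∑' k : ℕ, ‖x‖ ^ k / k.factorial := by
        rw [Real.exp_eq_exp_ℝ, NormedSpace.exp_eq_tsum_div]
      rw [hexpsum]
      refine Summable.tsum_le_tsum (fun k => ?_) (NormedSpace.norm_expSeries_summable' (𝕂 := ℂ) x)
        (Real.summable_pow_div_factorial _)
      rw [norm_smul, norm_inv, Complex.norm_natCast]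
      calc ((k.factorial : ℝ))⁻¹ * ‖x ^ k‖ ≤ ((k.factorial : ℝ))⁻¹ * ‖x‖ ^ k := by
            gcongr
            exact norm_pow_le _ _
        _ = ‖x‖ ^ k / k.factorial := (div_eq_inv_mul _ _).symm
    -- second bound : r ≤ exp s
    have hb2 : (spectralRadius ℂ a).toReal ≤ Real.exp s := by
      have htend : Filter.Tendsto
          (fun n : ℕ => (C * ((n : ℝ) + 2)) ^ ((1 : ℝ) / ((n : ℝ) + 1)) * Real.exp s)
          Filter.atTop (nhds (Real.exp s)) := by
        simpa using (kittaneh_aux_tendsto C hC0).mul_const (Real.exp s)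
      refine ge_of_tendsto' htend fun n => ?_
      have h1 := spectrum.spectralRadius_le_pow_nnnorm_pow_one_div ℂ a n
      rw [nnnorm_one, ENNReal.coe_one, ENNReal.one_rpow, mul_one] at h1
      have h2 : (spectralRadius ℂ a).toReal ≤ ‖a ^ (n + 1)‖ ^ ((1:ℝ) / ((n:ℝ) + 1)) := by
        have h3 := ENNReal.toReal_mono
          (ENNReal.rpow_ne_top_of_nonneg (by positivity) ENNReal.coe_ne_top) h1
        rwa [← ENNReal.toReal_rpow, ENNReal.coe_toReal, coe_nnnorm] at h3
      refine h2.trans ?_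
      have h4 : ‖a ^ (n + 1)‖ ≤ C * ((n : ℝ) + 2) * Real.exp (((n : ℝ) + 1) * s) := by
        have := hkey (n + 1)
        push_cast at this
        calc ‖a ^ (n + 1)‖ ≤ C * (1 + ((n:ℝ) + 1)) * Real.exp (((n:ℝ) + 1) * s) := this
          _ = C * ((n : ℝ) + 2) * Real.exp (((n : ℝ) + 1) * s) := by ring_nf
      calc ‖a ^ (n + 1)‖ ^ ((1:ℝ) / ((n:ℝ) + 1))
          ≤ (C * ((n : ℝ) + 2) * Real.exp (((n : ℝ) + 1) * s)) ^ ((1:ℝ) / ((n:ℝ) + 1)) :=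
            Real.rpow_le_rpow (norm_nonneg _) h4 (by positivity)
        _ = (C * ((n : ℝ) + 2)) ^ ((1:ℝ) / ((n:ℝ) + 1)) * Real.exp s := by
            rw [Real.mul_rpow (by positivity) (Real.exp_pos _).le,
              Real.rpow_def_of_pos (Real.exp_pos _), Real.log_exp]
            congr 2
            field_simp
    linarith
end
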